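/- arXiv:2511.17051 — 5 statements merged into one kernel-verified Lean document; each statement's English description precedes it below -/
import Mathlib

section
/- A subset R of S^n_+ ∩ V is an extreme ray of the closed convex cone S^n_+ ∩ V if and only if R = ℝ₊·(Tᵀ·I^{{i}}·T) for some T ∈ 𝕋_++ and some i ∈ {1,…,r}. -/
noncomputable section
open scoped Classical
open Matrix

/-- A face of a convex cone `C`: a nonempty convex subset `F ⊆ C` such that whenever the open
segment between two points of `C` meets `F`, both endpoints lie in `F`. -/
def IsFaceOf {E : Type*} [AddCommGroup E] [Module ℝ E] (F C : Set E) : Prop :=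
  F.Nonempty ∧ F ⊆ C ∧ Convex ℝ F ∧
    ∀ x ∈ C, ∀ y ∈ C, (∃ t : ℝ, 0 < t ∧ t < 1 ∧ t • x + (1 - t) • y ∈ F) → x ∈ F ∧ y ∈ F

/-- An extreme ray of `C`: a face whose linear span is one-dimensional. -/
def IsExtremeRayOf {E : Type*} [AddCommGroup E] [Module ℝ E] (R C : Set E) : Prop :=
  IsFaceOf R C ∧ Module.finrank ℝ (Submodule.span ℝ R) = 1

/-- `x` is a sum of at most `m` points, each lying on an extreme ray of `C`. -/
def SumExtreme {E : Type*} [AddCommGroup E] [Module ℝ E] (C : Set E) (m : ℕ) (x : E) : Prop :=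
  ∃ (k : ℕ) (f : Fin k → E), k ≤ m ∧ (∀ i, ∃ R, IsExtremeRayOf R C ∧ f i ∈ R) ∧ x = ∑ i, f i

/-- The Carathéodory number of the cone `C`. -/
def caraNumber {E : Type*} [AddCommGroup E] [Module ℝ E] (C : Set E) : ℕ :=
  sInf {m | ∀ x ∈ C, SumExtreme C m x}

/-- The ray generated by a point. -/
def ray {E : Type*} [AddCommGroup E] [Module ℝ E] (A : E) : Set E :=
  {X | ∃ c : ℝ, 0 ≤ c ∧ X = c • A}

/-- The trace (Frobenius) inner product on spaces of rectangular real matrices. -/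
def trInner {a b : Type*} [Fintype a] [Fintype b] (X Y : Matrix a b ℝ) : ℝ :=
  Matrix.trace (Xᵀ * Y)

/-- `y` is the orthogonal projection of `x` onto the subspace `W` (with respect to the
trace inner product). -/
def IsProjOn {a b : Type*} [Fintype a] [Fintype b] (W : Set (Matrix a b ℝ))
    (x y : Matrix a b ℝ) : Prop :=
  y ∈ W ∧ ∀ w ∈ W, trInner (x - y) w = 0

/-- The image of the set `S` under orthogonal projection onto the subspace `W`. -/
def projSet {a b : Type*} [Fintype a] [Fintype b] (W S : Set (Matrix a b ℝ)) :
    Set (Matrix a b ℝ) :=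
  {y | ∃ x ∈ S, IsProjOn W x y}

/-- The cone of positive semidefinite matrices. -/
def PSD (ι : Type*) [Fintype ι] : Set (Matrix ι ι ℝ) := {X | X.PosSemidef}

variable {r : ℕ}

/-- Index type for an `n₁ + ⋯ + n_r` block partition. -/
abbrev BIx (n : Fin r → ℕ) : Type := Σ i : Fin r, Fin (n i)

/-- The `(i,j)` block of a block matrix. -/
def blk {n : Fin r → ℕ} (X : Matrix (BIx n) (BIx n) ℝ) (i j : Fin r) :
    Matrix (Fin (n i)) (Fin (n j)) ℝ :=
  Matrix.of fun a b => X ⟨i, a⟩ ⟨j, b⟩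

/-- The space `V` of symmetric block matrices whose blocks lie in the subspaces `Vb i j`
(for `i ≤ j`; the diagonal subspaces `Vb i i` are required elsewhere to be `ℝ·I`). -/
def Vset (n : Fin r → ℕ)
    (Vb : ∀ i j : Fin r, Submodule ℝ (Matrix (Fin (n i)) (Fin (n j)) ℝ)) :
    Set (Matrix (BIx n) (BIx n) ℝ) :=
  {X | X.IsSymm ∧ ∀ i j : Fin r, i ≤ j → blk X i j ∈ Vb i j}

/-- The set `𝕋` of upper block-triangular matrices with diagonal blocks in `ℝ·I` and
off-diagonal blocks in the `Vb i j`. -/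
def TT (n : Fin r → ℕ)
    (Vb : ∀ i j : Fin r, Submodule ℝ (Matrix (Fin (n i)) (Fin (n j)) ℝ)) :
    Set (Matrix (BIx n) (BIx n) ℝ) :=
  {T | (∀ i j : Fin r, j < i → blk T i j = 0) ∧
    (∀ i : Fin r, ∃ c : ℝ, blk T i i = c • (1 : Matrix (Fin (n i)) (Fin (n i)) ℝ)) ∧
    (∀ i j : Fin r, i < j → blk T i j ∈ Vb i j)}

/-- The set `𝕋₊₊ ⊆ 𝕋` of matrices with positive diagonal entries. -/
def TTpp (n : Fin r → ℕ)
    (Vb : ∀ i j : Fin r, Submodule ℝ (Matrix (Fin (n i)) (Fin (n j)) ℝ)) :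
    Set (Matrix (BIx n) (BIx n) ℝ) :=
  {T | (∀ i j : Fin r, j < i → blk T i j = 0) ∧
    (∀ i : Fin r, ∃ c : ℝ, 0 < c ∧ blk T i i = c • (1 : Matrix (Fin (n i)) (Fin (n i)) ℝ)) ∧
    (∀ i j : Fin r, i < j → blk T i j ∈ Vb i j)}

/-- The Ishi spectrahedral cone `K = S^n_{++} ∩ V`. -/
def Kcone (n : Fin r → ℕ)
    (Vb : ∀ i j : Fin r, Submodule ℝ (Matrix (Fin (n i)) (Fin (n j)) ℝ)) :
    Set (Matrix (BIx n) (BIx n) ℝ) :=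
  {X | X.PosDef ∧ X ∈ Vset n Vb}

/-- The closure `S^n_+ ∩ V` of the Ishi spectrahedral cone. -/
def KclSet (n : Fin r → ℕ)
    (Vb : ∀ i j : Fin r, Submodule ℝ (Matrix (Fin (n i)) (Fin (n j)) ℝ)) :
    Set (Matrix (BIx n) (BIx n) ℝ) :=
  {X | X.PosSemidef ∧ X ∈ Vset n Vb}

/-- The dual cone `D = proj_V (S^n_+)` of `K` in `V`. -/
def dualD (n : Fin r → ℕ)
    (Vb : ∀ i j : Fin r, Submodule ℝ (Matrix (Fin (n i)) (Fin (n j)) ℝ)) :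
    Set (Matrix (BIx n) (BIx n) ℝ) :=
  projSet (Vset n Vb) (PSD (BIx n))

/-- The subspace `V^B` of matrices of `V` supported on blocks indexed by `B × B`. -/
def VBset (n : Fin r → ℕ)
    (Vb : ∀ i j : Fin r, Submodule ℝ (Matrix (Fin (n i)) (Fin (n j)) ℝ))
    (B : Finset (Fin r)) : Set (Matrix (BIx n) (BIx n) ℝ) :=
  {X | X ∈ Vset n Vb ∧ ∀ i j : Fin r, i ≤ j → (i ∉ B ∨ j ∉ B) → blk X i j = 0}

/-- The matrix `I^B` whose diagonal blocks indexed by `B` are identity blocks and whose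
other blocks vanish. -/
def IB (n : Fin r → ℕ) (B : Finset (Fin r)) : Matrix (BIx n) (BIx n) ℝ :=
  Matrix.of fun a b => if a = b ∧ a.1 ∈ B then 1 else 0

/-- The face `F_{T,B} = Tᵀ·(S^n_+ ∩ V^B)·T` of the closure `S^n_+ ∩ V`. -/
def FTB (n : Fin r → ℕ)
    (Vb : ∀ i j : Fin r, Submodule ℝ (Matrix (Fin (n i)) (Fin (n j)) ℝ))
    (T : Matrix (BIx n) (BIx n) ℝ) (B : Finset (Fin r)) :
    Set (Matrix (BIx n) (BIx n) ℝ) :=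
  {Y | ∃ X, Matrix.PosSemidef X ∧ X ∈ VBset n Vb B ∧ Y = Tᵀ * X * T}

/-- The face `F^*_{T,N} = proj_V (T · proj_{V^N}(S^n_+) · Tᵀ)` of the dual cone. -/
def FstarTN (n : Fin r → ℕ)
    (Vb : ∀ i j : Fin r, Submodule ℝ (Matrix (Fin (n i)) (Fin (n j)) ℝ))
    (T : Matrix (BIx n) (BIx n) ℝ) (N : Finset (Fin r)) :
    Set (Matrix (BIx n) (BIx n) ℝ) :=
  {Z | ∃ Y ∈ projSet (VBset n Vb N) (PSD (BIx n)), IsProjOn (Vset n Vb) (T * Y * Tᵀ) Z}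


section Aux
variable {r : ℕ} {n : Fin r → ℕ}

lemma blk_apply (X : Matrix (BIx n) (BIx n) ℝ) (i j : Fin r) (a b) :
    blk X i j a b = X ⟨i, a⟩ ⟨j, b⟩ := rfl

lemma blk_ext {X Y : Matrix (BIx n) (BIx n) ℝ} (h : ∀ i j, blk X i j = blk Y i j) : X = Y := by
  ext ⟨i, a⟩ ⟨j, b⟩
  exact congrFun (congrFun (h i j) a) b

@[simp] lemma blk_add (X Y : Matrix (BIx n) (BIx n) ℝ) (i j : Fin r) :
    blk (X + Y) i j = blk X i j + blk Y i j := rfl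

@[simp] lemma blk_sub (X Y : Matrix (BIx n) (BIx n) ℝ) (i j : Fin r) :
    blk (X - Y) i j = blk X i j - blk Y i j := rfl

@[simp] lemma blk_smul (c : ℝ) (X : Matrix (BIx n) (BIx n) ℝ) (i j : Fin r) :
    blk (c • X) i j = c • blk X i j := rfl

@[simp] lemma blk_zero (i j : Fin r) : blk (0 : Matrix (BIx n) (BIx n) ℝ) i j = 0 := rfl

@[simp] lemma blk_transpose (X : Matrix (BIx n) (BIx n) ℝ) (i j : Fin r) :
    blk Xᵀ i j = (blk X j i)ᵀ := rfl

lemma sum_bix (f : BIx n → ℝ) : ∑ a : BIx n, f a = ∑ i : Fin r, ∑ x : Fin (n i), f ⟨i, x⟩ := by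
  rw [← Finset.univ_sigma_univ, Finset.sum_sigma]

lemma blk_mul (X Y : Matrix (BIx n) (BIx n) ℝ) (i j : Fin r) :
    blk (X * Y) i j = ∑ k : Fin r, blk X i k * blk Y k j := by
  ext a b
  rw [Matrix.sum_apply]
  show (X * Y) ⟨i, a⟩ ⟨j, b⟩ = _
  rw [Matrix.mul_apply, sum_bix (fun c => X ⟨i,a⟩ c * Y c ⟨j,b⟩)]
  refine Finset.sum_congr rfl fun k _ => ?_
  rw [Matrix.mul_apply]
  rfl

lemma blk_one_diag (i : Fin r) : blk (1 : Matrix (BIx n) (BIx n) ℝ) i i = 1 := by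
  ext a b
  show (1 : Matrix (BIx n) (BIx n) ℝ) ⟨i,a⟩ ⟨i,b⟩ = _
  simp [Matrix.one_apply]

lemma blk_one_off {i j : Fin r} (h : i ≠ j) : blk (1 : Matrix (BIx n) (BIx n) ℝ) i j = 0 := by
  ext a b
  show (1 : Matrix (BIx n) (BIx n) ℝ) ⟨i,a⟩ ⟨j,b⟩ = _
  rw [Matrix.one_apply_ne (by simp [h])]
  rfl

lemma IB_eq_diagonal (B : Finset (Fin r)) :
    IB n B = Matrix.diagonal (fun a : BIx n => if a.1 ∈ B then (1:ℝ) else 0) := by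
  ext a b
  show (if a = b ∧ a.1 ∈ B then (1:ℝ) else 0) = _
  by_cases h : a = b
  · subst h; simp [Matrix.diagonal]
  · simp [Matrix.diagonal_apply_ne _ h, h]

lemma IB_apply (B : Finset (Fin r)) (a b : BIx n) :
    IB n B a b = if a = b ∧ a.1 ∈ B then 1 else 0 := rfl

@[simp] lemma IB_transpose (B : Finset (Fin r)) : (IB n B)ᵀ = IB n B := by
  rw [IB_eq_diagonal]; exact Matrix.diagonal_transpose _

lemma IB_mul_apply (B : Finset (Fin r)) (X : Matrix (BIx n) (BIx n) ℝ) (a b : BIx n) :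
    (IB n B * X) a b = if a.1 ∈ B then X a b else 0 := by
  rw [IB_eq_diagonal, Matrix.diagonal_mul]
  by_cases h : a.1 ∈ B <;> simp [h]

lemma mul_IB_apply (B : Finset (Fin r)) (X : Matrix (BIx n) (BIx n) ℝ) (a b : BIx n) :
    (X * IB n B) a b = if b.1 ∈ B then X a b else 0 := by
  rw [IB_eq_diagonal, Matrix.mul_diagonal]
  by_cases h : b.1 ∈ B <;> simp [h]

lemma IB_mul_IB (B : Finset (Fin r)) : IB n B * IB n B = IB n B := by
  ext a b
  rw [IB_mul_apply]
  by_cases h : a.1 ∈ B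
  · simp [h]
  · simp [IB_apply, h]

lemma IB_empty : IB n (∅ : Finset (Fin r)) = 0 := by
  ext a b
  simp [IB_apply]

lemma IB_insert {p : Fin r} {B : Finset (Fin r)} (hp : p ∉ B) :
    IB n (insert p B) = IB n {p} + IB n B := by
  ext a b
  by_cases hab : a = b
  · subst hab
    by_cases h1 : a.1 = p <;> by_cases h2 : a.1 ∈ B <;>
      simp_all [IB_apply, Matrix.add_apply]
  · simp [IB_apply, hab, Matrix.add_apply]

end Aux
section Aux2
variable {r : ℕ} {n : Fin r → ℕ}

lemma psd_diag_nonneg {m : Type*} [Fintype m] {X : Matrix m m ℝ}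
    (hX : X.PosSemidef) (a : m) : 0 ≤ X a a := by
  classical
  obtain ⟨B, rfl⟩ := (show ∃ B : Matrix m m ℝ, X = Bᴴ * B by
    open scoped MatrixOrder in exact CStarAlgebra.nonneg_iff_eq_star_mul_self.mp hX.nonneg)
  rw [Matrix.mul_apply]
  refine Finset.sum_nonneg fun c _ => ?_
  simp [Matrix.conjTranspose_apply, mul_self_nonneg]

lemma psd_row_zero {m : Type*} [Fintype m] {X : Matrix m m ℝ}
    (hX : X.PosSemidef) {a : m} (ha : X a a = 0) (b : m) : X a b = 0 := by
  classical
  obtain ⟨B, rfl⟩ := (show ∃ B : Matrix m m ℝ, X = Bᴴ * B by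
    open scoped MatrixOrder in exact CStarAlgebra.nonneg_iff_eq_star_mul_self.mp hX.nonneg)
  have h0 : ∀ c, B c a = 0 := by
    intro c
    have hsum : ∑ c, B c a * B c a = 0 := by
      rw [← ha, Matrix.mul_apply]
      refine Finset.sum_congr rfl fun c _ => ?_
      simp [Matrix.conjTranspose_apply]
    have := (Finset.sum_eq_zero_iff_of_nonneg
      (fun c _ => mul_self_nonneg (B c a))).mp hsum c (Finset.mem_univ c)
    exact mul_self_eq_zero.mp this
  rw [Matrix.mul_apply]
  refine Finset.sum_eq_zero fun c _ => ?_
  simp [Matrix.conjTranspose_apply, h0 c]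

lemma psd_col_zero {m : Type*} [Fintype m] {X : Matrix m m ℝ}
    (hX : X.PosSemidef) {a : m} (ha : X a a = 0) (b : m) : X b a = 0 := by
  have hsym : X b a = X a b := by
    have := hX.isHermitian
    have h2 := congrFun (congrFun this b) a
    simpa [Matrix.conjTranspose_apply] using h2.symm
  rw [hsym]
  exact psd_row_zero hX ha b

lemma psd_trace_nonneg {m : Type*} [Fintype m] {X : Matrix m m ℝ}
    (hX : X.PosSemidef) : 0 ≤ X.trace := by
  refine Finset.sum_nonneg fun a _ => psd_diag_nonneg hX a

lemma psd_trace_zero {m : Type*} [Fintype m] {X : Matrix m m ℝ}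
    (hX : X.PosSemidef) (h : X.trace = 0) : X = 0 := by
  classical
  have hd : ∀ a, X a a = 0 := by
    intro a
    exact (Finset.sum_eq_zero_iff_of_nonneg
      (fun a _ => psd_diag_nonneg hX a)).mp h a (Finset.mem_univ a)
  ext a b
  exact psd_row_zero hX (hd a) b

lemma psd_smul {m : Type*} [Fintype m] {X : Matrix m m ℝ}
    (hX : X.PosSemidef) {c : ℝ} (hc : 0 ≤ c) : (c • X).PosSemidef := by
  constructor
  · show (c • X)ᴴ = c • X
    rw [Matrix.conjTranspose_smul, star_trivial, hX.1]
  · intro x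
    have := hX.2 x
    exact (hX.smul hc).2 x

lemma blk_triple (T M : Matrix (BIx n) (BIx n) ℝ) (j l : Fin r) :
    blk (Tᵀ * M * T) j l = ∑ q : Fin r, ∑ p : Fin r, (blk T q j)ᵀ * blk M q p * blk T p l := by
  rw [blk_mul, Finset.sum_congr rfl (fun p _ => by rw [blk_mul])]
  rw [Finset.sum_comm]
  refine Finset.sum_congr rfl fun q _ => ?_
  rw [Matrix.sum_mul]
  refine Finset.sum_congr rfl fun p _ => ?_
  rw [blk_transpose]

lemma blk_conj_IB (T : Matrix (BIx n) (BIx n) ℝ) (B : Finset (Fin r)) (j l : Fin r) :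
    blk (Tᵀ * IB n B * T) j l
      = ∑ q : Fin r, (if q ∈ B then (blk T q j)ᵀ * blk T q l else 0) := by
  rw [blk_triple]
  refine Finset.sum_congr rfl fun q _ => ?_
  rw [Finset.sum_eq_single q]
  · by_cases h : q ∈ B
    · have : blk (IB n B) q q = (1 : Matrix (Fin (n q)) (Fin (n q)) ℝ) := by
        ext a b
        show (IB n B) ⟨q,a⟩ ⟨q,b⟩ = _
        rw [IB_apply]
        by_cases hab : a = b
        · subst hab; simp [h]
        · simp [hab, Matrix.one_apply, Sigma.ext_iff]
      rw [this, if_pos h, Matrix.mul_one]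
    · have : blk (IB n B) q q = 0 := by
        ext a b
        show (IB n B) ⟨q,a⟩ ⟨q,b⟩ = _
        rw [IB_apply]
        simp [h]
      rw [this, if_neg h, Matrix.mul_zero, Matrix.zero_mul]
  · intro p _ hpq
    have : blk (IB n B) q p = 0 := by
      ext a b
      show (IB n B) ⟨q,a⟩ ⟨p,b⟩ = _
      rw [IB_apply]
      have : (⟨q,a⟩ : BIx n) ≠ ⟨p,b⟩ := by
        intro hc
        exact hpq.symm (congrArg Sigma.fst hc)
      simp [this]
    rw [this, Matrix.mul_zero, Matrix.zero_mul]
  · intro h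
    exact absurd (Finset.mem_univ q) h

end Aux2
section Aux3
variable {r : ℕ} {n : Fin r → ℕ}
variable {Vb : ∀ i j : Fin r, Submodule ℝ (Matrix (Fin (n i)) (Fin (n j)) ℝ)}

lemma one_mem_TTpp : (1 : Matrix (BIx n) (BIx n) ℝ) ∈ TTpp n Vb := by
  refine ⟨fun i j hji => blk_one_off (ne_of_gt hji), fun i => ⟨1, one_pos, by
    rw [blk_one_diag, one_smul]⟩, fun i j hij => ?_⟩
  rw [blk_one_off (ne_of_lt hij)]
  exact Submodule.zero_mem _

lemma TTpp_blk_mem (hdiag : ∀ i : Fin r, Vb i i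
      = Submodule.span ℝ {(1 : Matrix (Fin (n i)) (Fin (n i)) ℝ)})
    {T : Matrix (BIx n) (BIx n) ℝ} (hT : T ∈ TTpp n Vb)
    {i q : Fin r} (h : i ≤ q) : blk T i q ∈ Vb i q := by
  rcases lt_or_eq_of_le h with h' | h'
  · exact hT.2.2 i q h'
  · subst h'
    obtain ⟨c, _, hcc⟩ := hT.2.1 i
    rw [hcc, hdiag i]
    exact Submodule.smul_mem _ c (Submodule.mem_span_singleton_self _)

lemma TTpp_mul (hdiag : ∀ i : Fin r, Vb i i
      = Submodule.span ℝ {(1 : Matrix (Fin (n i)) (Fin (n i)) ℝ)})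
    (hV1 : ∀ i j k : Fin r, i ≤ j → j ≤ k → ∀ A ∈ Vb i j, ∀ B ∈ Vb j k, A * B ∈ Vb i k)
    {S T : Matrix (BIx n) (BIx n) ℝ}
    (hS : S ∈ TTpp n Vb) (hT : T ∈ TTpp n Vb) : S * T ∈ TTpp n Vb := by
  obtain ⟨hS1, hS2, hS3⟩ := hS
  obtain ⟨hT1, hT2, hT3⟩ := hT
  refine ⟨?_, ?_, ?_⟩
  · intro i j hji
    rw [blk_mul]
    refine Finset.sum_eq_zero fun q _ => ?_
    rcases lt_or_ge q i with h | h
    · rw [hS1 i q h, Matrix.zero_mul]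
    · rw [hT1 q j (lt_of_lt_of_le hji h), Matrix.mul_zero]
  · intro i
    obtain ⟨c, hc, hcc⟩ := hS2 i
    obtain ⟨d, hd, hdd⟩ := hT2 i
    refine ⟨c * d, mul_pos hc hd, ?_⟩
    rw [blk_mul, Finset.sum_eq_single i]
    · rw [hcc, hdd, Matrix.smul_mul, Matrix.mul_smul, Matrix.one_mul, smul_smul]
    · intro q _ hq
      rcases lt_or_ge q i with h | h
      · rw [hS1 i q h, Matrix.zero_mul]
      · rw [hT1 q i (lt_of_le_of_ne h (Ne.symm hq)), Matrix.mul_zero]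
    · intro h; exact absurd (Finset.mem_univ i) h
  · intro i j hij
    rw [blk_mul]
    refine Submodule.sum_mem _ fun q _ => ?_
    rcases lt_or_ge q i with h | h
    · rw [hS1 i q h, Matrix.zero_mul]; exact Submodule.zero_mem _
    rcases lt_or_ge j q with h2 | h2
    · rw [hT1 q j h2, Matrix.mul_zero]; exact Submodule.zero_mem _
    · exact hV1 i q j h h2 _ (TTpp_blk_mem hdiag ⟨hS1, hS2, hS3⟩ h) _
        (TTpp_blk_mem hdiag ⟨hT1, hT2, hT3⟩ h2)

lemma TTpp_det_pos {T : Matrix (BIx n) (BIx n) ℝ} (hT : T ∈ TTpp n Vb) : 0 < T.det := by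
  obtain ⟨h1, h2, _⟩ := hT
  have hbt : T.BlockTriangular Sigma.fst := by
    intro a c h
    exact congrFun (congrFun (h1 a.1 c.1 h) a.2) c.2
  rw [hbt.det]
  refine Finset.prod_pos fun i _ => ?_
  obtain ⟨c, hc, hcc⟩ := h2 i
  have hblock : T.toSquareBlock Sigma.fst i
      = c • (1 : Matrix {a : BIx n // a.1 = i} {a : BIx n // a.1 = i} ℝ) := by
    ext a b
    obtain ⟨⟨a1, a2⟩, ha⟩ := a
    obtain ⟨⟨b1, b2⟩, hb⟩ := b
    dsimp at ha hb
    subst ha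
    subst hb
    refine (congrFun (congrFun hcc _) _).trans ?_
    simp [Matrix.smul_apply, Matrix.one_apply, Subtype.ext_iff, Sigma.ext_iff]
  rw [hblock, Matrix.det_smul, Matrix.det_one, mul_one]
  exact pow_pos hc _

lemma TTpp_det_isUnit {T : Matrix (BIx n) (BIx n) ℝ} (hT : T ∈ TTpp n Vb) : IsUnit T.det :=
  isUnit_iff_ne_zero.mpr (ne_of_gt (TTpp_det_pos hT))

lemma conj_unconj {T M : Matrix (BIx n) (BIx n) ℝ} (hdet : IsUnit T.det) :
    Tᵀ⁻¹ * (Tᵀ * M * T) * T⁻¹ = M := by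
  have hdt : IsUnit Tᵀ.det := by rwa [Matrix.det_transpose]
  rw [Matrix.mul_assoc Tᵀ M T, Matrix.nonsing_inv_mul_cancel_left _ _ hdt,
    Matrix.mul_nonsing_inv_cancel_right _ _ hdet]

lemma conj_cancel {T M N : Matrix (BIx n) (BIx n) ℝ} (hdet : IsUnit T.det)
    (h : Tᵀ * M * T = Tᵀ * N * T) : M = N := by
  have := congrArg (fun Z => Tᵀ⁻¹ * Z * T⁻¹) h
  simpa [conj_unconj hdet] using this

lemma conj_IB_psd (T : Matrix (BIx n) (BIx n) ℝ) (B : Finset (Fin r)) :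
    (Tᵀ * IB n B * T).PosSemidef := by
  have hE : (IB n B).PosSemidef := by
    rw [IB_eq_diagonal]
    refine Matrix.PosSemidef.diagonal ?_
    intro a
    by_cases h : a.1 ∈ B <;> simp [h]
  have := hE.conjTranspose_mul_mul_same T
  rwa [Matrix.conjTranspose_eq_transpose_of_trivial] at this

lemma conj_IB_symm (T : Matrix (BIx n) (BIx n) ℝ) (B : Finset (Fin r)) :
    (Tᵀ * IB n B * T).IsSymm := by
  show (Tᵀ * IB n B * T)ᵀ = _
  rw [Matrix.transpose_mul, Matrix.transpose_mul, Matrix.transpose_transpose, IB_transpose,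
    ← Matrix.mul_assoc, Matrix.mul_assoc Tᵀ (IB n B) T]

lemma conj_IB_mem_Vset
    (hdiag : ∀ i : Fin r, Vb i i
      = Submodule.span ℝ {(1 : Matrix (Fin (n i)) (Fin (n i)) ℝ)})
    (hV2 : ∀ i j k : Fin r, i ≤ j → j < k → ∀ A ∈ Vb i j, ∀ B ∈ Vb i k, Aᵀ * B ∈ Vb j k)
    (hV3 : ∀ i j : Fin r, i ≤ j → ∀ A ∈ Vb i j,
      ∃ c : ℝ, Aᵀ * A = c • (1 : Matrix (Fin (n j)) (Fin (n j)) ℝ))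
    {T : Matrix (BIx n) (BIx n) ℝ} (hT : T ∈ TTpp n Vb) (B : Finset (Fin r)) :
    Tᵀ * IB n B * T ∈ Vset n Vb := by
  refine ⟨conj_IB_symm T B, ?_⟩
  intro j l hjl
  rw [blk_conj_IB]
  refine Submodule.sum_mem _ fun q _ => ?_
  by_cases hq : q ∈ B
  · rw [if_pos hq]
    rcases lt_or_ge j q with h | h
    · rw [hT.1 q j h, Matrix.transpose_zero, Matrix.zero_mul]
      exact Submodule.zero_mem _
    · rcases lt_or_eq_of_le hjl with h2 | h2
      · exact hV2 q j l h h2 _ (TTpp_blk_mem hdiag hT h) _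
          (TTpp_blk_mem hdiag hT (le_of_lt (lt_of_le_of_lt h h2)))
      · subst h2
        obtain ⟨c, hcc⟩ := hV3 q j h _ (TTpp_blk_mem hdiag hT h)
        rw [hcc, hdiag j]
        exact Submodule.smul_mem _ c (Submodule.mem_span_singleton_self _)
  · rw [if_neg hq]
    exact Submodule.zero_mem _

end Aux3
section Aux4
variable {r : ℕ} {n : Fin r → ℕ}
variable {Vb : ∀ i j : Fin r, Submodule ℝ (Matrix (Fin (n i)) (Fin (n j)) ℝ)}

lemma cholesky
    (hn : ∀ i, 0 < n i)
    (hdiag : ∀ i : Fin r, Vb i i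
      = Submodule.span ℝ {(1 : Matrix (Fin (n i)) (Fin (n i)) ℝ)})
    (hV1 : ∀ i j k : Fin r, i ≤ j → j ≤ k → ∀ A ∈ Vb i j, ∀ B ∈ Vb j k, A * B ∈ Vb i k)
    (hV2 : ∀ i j k : Fin r, i ≤ j → j < k → ∀ A ∈ Vb i j, ∀ B ∈ Vb i k, Aᵀ * B ∈ Vb j k)
    (hV3 : ∀ i j : Fin r, i ≤ j → ∀ A ∈ Vb i j,
      ∃ c : ℝ, Aᵀ * A = c • (1 : Matrix (Fin (n j)) (Fin (n j)) ℝ)) :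
    ∀ m : ℕ, ∀ X : Matrix (BIx n) (BIx n) ℝ, X.PosSemidef → X ∈ Vset n Vb →
      (∀ a b : BIx n, ((a.1 : ℕ) < r - m ∨ (b.1 : ℕ) < r - m) → X a b = 0) →
      ∃ T ∈ TTpp n Vb,
        (∀ a b : BIx n, (a.1 : ℕ) < r - m → T a b = (1 : Matrix (BIx n) (BIx n) ℝ) a b) ∧
        ∃ B : Finset (Fin r), (∀ i ∈ B, r - m ≤ (i : ℕ)) ∧ X = Tᵀ * IB n B * T := by
  intro m
  induction m with
  | zero =>
    intro X _ _ hsupp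
    refine ⟨1, one_mem_TTpp, fun a b _ => rfl, ∅, by simp, ?_⟩
    have hX0 : X = 0 := by
      ext a b
      exact hsupp a b (Or.inl (by simpa using a.1.isLt))
    rw [hX0, IB_empty, Matrix.mul_zero, Matrix.zero_mul]
  | succ m IH =>
    intro X hpsd hV hsupp
    by_cases hm : m < r
    case neg =>
      have h0 : r - m = 0 := Nat.sub_eq_zero_of_le (le_of_not_gt hm)
      have h1 : r - (m + 1) = 0 := by omega
      obtain ⟨T, hT, hTid, B, hB, hXB⟩ := IH X hpsd hV (by
        intro a b hab
        exact hsupp a b (by omega))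
      exact ⟨T, hT, fun a b h => hTid a b (by omega), B, fun i hi => by omega, hXB⟩
    case pos =>
      set k := r - (m + 1) with hk
      have hkr : k < r := by omega
      have hk1 : k + 1 = r - m := by omega
      set p : Fin r := ⟨k, hkr⟩ with hp
      have hpk : (p : ℕ) = k := rfl
      have hXsym : ∀ a b, X a b = X b a := fun a b => congrFun (congrFun hV.1 b) a
      have hpp : blk X p p ∈ Vb p p := hV.2 p p le_rfl
      rw [hdiag p] at hpp
      obtain ⟨s, hs⟩ := Submodule.mem_span_singleton.mp hpp
      have hblockpp : ∀ a b : BIx n, a.1 = p → b.1 = p →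
          X a b = if a = b then s else 0 := by
        intro ⟨a1, a2⟩ ⟨b1, b2⟩ ha hb
        dsimp at ha hb
        subst ha
        subst hb
        have hent := congrFun (congrFun hs a2) b2
        show blk X p p a2 b2 = _
        rw [← hent, Matrix.smul_apply, Matrix.one_apply]
        by_cases h : a2 = b2
        · subst h
          simp
        · rw [if_neg h, if_neg (by simp [Sigma.ext_iff, h]), smul_zero]
      have hdiagentry : ∀ z : Fin (n p), X ⟨p, z⟩ ⟨p, z⟩ = s := by
        intro z
        rw [hblockpp ⟨p, z⟩ ⟨p, z⟩ rfl rfl, if_pos rfl]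
      have hsnn : 0 ≤ s := by
        rw [← hdiagentry ⟨0, hn p⟩]
        exact psd_diag_nonneg hpsd _
      rcases eq_or_lt_of_le hsnn with hs0 | hspos
      · -- zero pivot: whole block row/column vanishes
        have hrow0 : ∀ (a b : BIx n), a.1 = p → X a b = 0 := by
          intro a b ha
          refine psd_row_zero hpsd ?_ b
          obtain ⟨a1, a2⟩ := a
          dsimp at ha
          subst ha
          rw [hdiagentry a2, ← hs0]
        obtain ⟨T, hT, hTid, B, hB, hXB⟩ := IH X hpsd hV (by
          intro a b hab
          rcases hab with h | h
          · by_cases h' : (a.1 : ℕ) < k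
            · exact hsupp a b (Or.inl h')
            · refine hrow0 a b ?_
              rw [Fin.ext_iff, hpk]
              omega
          · by_cases h' : (b.1 : ℕ) < k
            · exact hsupp a b (Or.inr h')
            · rw [hXsym]
              refine hrow0 b a ?_
              rw [Fin.ext_iff, hpk]
              omega)
        exact ⟨T, hT, fun a b h => hTid a b (by omega), B,
          fun i hi => le_trans (by omega) (hB i hi), hXB⟩
      · -- positive pivot
        set sq := Real.sqrt s with hsq
        have hsqpos : 0 < sq := Real.sqrt_pos.mpr hspos
        have hsqsq : sq * sq = s := Real.mul_self_sqrt (le_of_lt hspos)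
        have hsne : s ≠ 0 := ne_of_gt hspos
        set E := IB n ({p} : Finset (Fin r)) with hE
        have hEapply : ∀ a b : BIx n, E a b = if a = b ∧ a.1 = p then 1 else 0 := by
          intro a b
          rw [hE, IB_apply]
          simp
        have hEXa : ∀ a b : BIx n, (E * X) a b = if a.1 = p then X a b else 0 := by
          intro a b
          rw [hE, IB_mul_apply]
          simp
        have hXEa : ∀ a b : BIx n, (X * E) a b = if b.1 = p then X a b else 0 := by
          intro a b
          rw [hE, mul_IB_apply]
          simp
        have hEE : E * E = E := by rw [hE]; exact IB_mul_IB _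
        have hEt : Eᵀ = E := by rw [hE]; exact IB_transpose _
        have hXt : Xᵀ = X := hV.1
        have hEXE : E * X * E = s • E := by
          ext a b
          rw [show (E * X * E) a b = ((E * X) * E) a b from rfl, hE, mul_IB_apply, ← hE]
          simp only [Finset.mem_singleton, Matrix.smul_apply, hEapply, hEXa, smul_eq_mul]
          by_cases hb : b.1 = p
          · by_cases ha : a.1 = p
            · rw [if_pos hb, if_pos ha, hblockpp a b ha hb]
              by_cases hab : a = b
              · rw [if_pos hab, if_pos ⟨hab, ha⟩]
                ring
              · rw [if_neg hab, if_neg (fun hc => hab hc.1)]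
                ring
            · rw [if_pos hb, if_neg ha, if_neg (fun hc => ha hc.2)]
              ring
          · rw [if_neg hb, if_neg (fun hc : a = b ∧ a.1 = p => hb (by rw [← hc.1]; exact hc.2))]
            ring
        set Tp := (1 : Matrix (BIx n) (BIx n) ℝ) - E + sq⁻¹ • (E * X) with hTp
        have hETp : E * Tp = sq⁻¹ • (E * X) := by
          rw [hTp, Matrix.mul_add, Matrix.mul_sub, Matrix.mul_one, hEE, Matrix.mul_smul,
            ← Matrix.mul_assoc, hEE]
          simp
        have hTpETp : Tpᵀ * E * Tp = s⁻¹ • (X * E * X) := by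
          have h1 : Tpᵀ * E * Tp = (E * Tp)ᵀ * (E * Tp) := by
            rw [Matrix.transpose_mul, hEt, Matrix.mul_assoc Tpᵀ E (E * Tp),
              ← Matrix.mul_assoc E E Tp, hEE, ← Matrix.mul_assoc]
          rw [h1, hETp, Matrix.transpose_smul, Matrix.smul_mul, Matrix.mul_smul, smul_smul,
            Matrix.transpose_mul, hEt, hXt]
          have h2 : X * E * (E * X) = X * E * X := by
            rw [Matrix.mul_assoc X E (E * X), ← Matrix.mul_assoc E E X, hEE,
              ← Matrix.mul_assoc]
          rw [h2, ← mul_inv, hsqsq]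
        set X' := X - s⁻¹ • (X * E * X) with hX'
        have hX'TpE : X' = X - Tpᵀ * E * Tp := by rw [hTpETp]
        have step1 : X * E * X * E = s • (X * E) := by
          rw [Matrix.mul_assoc X E X, Matrix.mul_assoc X (E * X) E, hEXE, Matrix.mul_smul]
        have step2 : X * E * X * (E * X) = s • (X * E * X) := by
          rw [← Matrix.mul_assoc (X * E * X) E X, step1, Matrix.smul_mul]
        have hscalar : s⁻¹ * s⁻¹ * s = s⁻¹ := by field_simp
        have hP : (1 - s⁻¹ • (E * X))ᵀ * X * (1 - s⁻¹ • (E * X)) = X' := by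
          rw [Matrix.transpose_sub, Matrix.transpose_one, Matrix.transpose_smul,
            Matrix.transpose_mul, hEt, hXt]
          rw [Matrix.sub_mul, Matrix.one_mul, Matrix.smul_mul]
          rw [Matrix.mul_sub, Matrix.mul_one]
          rw [Matrix.sub_mul]
          rw [Matrix.mul_smul X s⁻¹ (E * X), ← Matrix.mul_assoc X E X]
          rw [Matrix.smul_mul, Matrix.mul_smul, step2, smul_smul, smul_smul, hscalar]
          rw [hX']
          abel
        have hX'psd : X'.PosSemidef := by
          have h := hpsd.conjTranspose_mul_mul_same (1 - s⁻¹ • (E * X))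
          rw [Matrix.conjTranspose_eq_transpose_of_trivial] at h
          rwa [hP] at h
        have hXEX : ∀ a b : BIx n,
            (X * E * X) a b = ∑ z : Fin (n p), X a ⟨p, z⟩ * X ⟨p, z⟩ b := by
          intro a b
          rw [show (X * E * X) a b = ∑ c, (X * E) a c * X c b from Matrix.mul_apply]
          rw [sum_bix (fun c => (X * E) a c * X c b)]
          rw [Finset.sum_eq_single p]
          · refine Finset.sum_congr rfl fun z _ => ?_
            rw [hXEa]
            simp
          · intro q _ hq
            refine Finset.sum_eq_zero fun z _ => ?_
            rw [hXEa]
            simp [hq]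
          · intro h; exact absurd (Finset.mem_univ p) h
        have hrowX' : ∀ (a1 : Fin r) (a2 : Fin (n a1)) (b : BIx n),
            (a1 : ℕ) < k + 1 → X' ⟨a1, a2⟩ b = 0 := by
          intro a1 a2 b ha
          by_cases h' : (a1 : ℕ) < k
          · have h1 : X ⟨a1, a2⟩ b = 0 := hsupp _ b (Or.inl h')
            have h2 : ∀ z : Fin (n p), X ⟨a1, a2⟩ ⟨p, z⟩ * X ⟨p, z⟩ b = 0 := fun z => by
              rw [hsupp _ _ (Or.inl h'), zero_mul]
            rw [hX', Matrix.sub_apply, Matrix.smul_apply, hXEX, h1,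
              Finset.sum_congr rfl fun z _ => h2 z]
            simp
          · have hap : a1 = p := by
              rw [Fin.ext_iff, hpk]
              omega
            subst hap
            rw [hX', Matrix.sub_apply, Matrix.smul_apply, hXEX]
            have hcollapse : (∑ z : Fin (n p), X ⟨p, a2⟩ ⟨p, z⟩ * X ⟨p, z⟩ b)
                = s * X ⟨p, a2⟩ b := by
              rw [Finset.sum_eq_single a2]
              · rw [hblockpp ⟨p, a2⟩ ⟨p, a2⟩ rfl rfl, if_pos rfl]
              · intro z _ hz
                rw [hblockpp ⟨p, a2⟩ ⟨p, z⟩ rfl rfl, if_neg (by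
                  simp only [Sigma.ext_iff, heq_eq_eq, true_and]
                  exact fun hc => hz hc.symm), zero_mul]
              · intro h; exact absurd (Finset.mem_univ a2) h
            rw [hcollapse, smul_eq_mul, ← mul_assoc, inv_mul_cancel₀ hsne, one_mul, sub_self]
        have hX'sym : X'ᵀ = X' := by
          rw [hX', Matrix.transpose_sub, Matrix.transpose_smul, Matrix.transpose_mul,
            Matrix.transpose_mul, hEt, hXt, ← Matrix.mul_assoc]
        have hX'supp : ∀ a b : BIx n, ((a.1 : ℕ) < k + 1 ∨ (b.1 : ℕ) < k + 1) → X' a b = 0 := by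
          intro a b hab
          rcases hab with h | h
          · obtain ⟨a1, a2⟩ := a
            exact hrowX' a1 a2 b h
          · obtain ⟨b1, b2⟩ := b
            have h2 := congrFun (congrFun hX'sym ⟨b1, b2⟩) a
            exact h2.trans (hrowX' b1 b2 a h)
        have hblkXEX : ∀ j l : Fin r, blk (X * E * X) j l = (blk X p j)ᵀ * blk X p l := by
          intro j l
          ext x y
          rw [blk_apply, hXEX, Matrix.mul_apply]
          refine Finset.sum_congr rfl fun z _ => ?_
          rw [Matrix.transpose_apply, blk_apply, blk_apply, hXsym ⟨j, x⟩ ⟨p, z⟩]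
        have hX'V : X' ∈ Vset n Vb := by
          refine ⟨hX'sym, ?_⟩
          intro j l hjl
          rw [hX', blk_sub, blk_smul, hblkXEX]
          by_cases hj : (j : ℕ) < k
          · have h1 : blk X j l = 0 := by ext x y; exact hsupp _ _ (Or.inl hj)
            have h2 : blk X p j = 0 := by ext x y; exact hsupp _ _ (Or.inr hj)
            rw [h1, h2, Matrix.transpose_zero, Matrix.zero_mul, smul_zero, sub_zero]
            exact Submodule.zero_mem _
          · have hpj : p ≤ j := by
              rw [Fin.le_def, hpk]
              omega
            have hA : blk X p j ∈ Vb p j := hV.2 p j hpj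
            refine Submodule.sub_mem _ (hV.2 j l hjl) (Submodule.smul_mem _ _ ?_)
            rcases lt_or_eq_of_le hjl with h2 | h2
            · exact hV2 p j l hpj h2 _ hA _ (hV.2 p l (le_trans hpj (le_of_lt h2)))
            · subst h2
              obtain ⟨c, hc⟩ := hV3 p j hpj _ hA
              rw [hc, hdiag j]
              exact Submodule.smul_mem _ _ (Submodule.mem_span_singleton_self _)
        obtain ⟨S, hS, hSid, B, hB, hX'B⟩ := IH X' hX'psd hX'V (by
          intro a b hab
          refine hX'supp a b ?_
          rcases hab with h | h
          · exact Or.inl (by omega)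
          · exact Or.inr (by omega))
        have hTpapply : ∀ a b : BIx n, Tp a b
            = (1 : Matrix (BIx n) (BIx n) ℝ) a b - E a b
              + sq⁻¹ * (if a.1 = p then X a b else 0) := by
          intro a b
          rw [hTp, Matrix.add_apply, Matrix.sub_apply, Matrix.smul_apply, hEXa, smul_eq_mul]
        have hTpmem : Tp ∈ TTpp n Vb := by
          refine ⟨?_, ?_, ?_⟩
          · intro i j hji
            ext x y
            show Tp ⟨i, x⟩ ⟨j, y⟩ = (0 : ℝ)
            rw [hTpapply]
            have hij : (⟨i, x⟩ : BIx n) ≠ ⟨j, y⟩ := fun hc =>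
              (ne_of_gt hji) (congrArg Sigma.fst hc)
            rw [Matrix.one_apply_ne hij, hEapply, if_neg (fun hc => hij hc.1)]
            by_cases hip : i = p
            · rw [if_pos hip]
              have hjval : (j : ℕ) < k := by
                have hlt := hji
                rw [Fin.lt_def] at hlt
                have hik : (i : ℕ) = k := by rw [hip, hpk]
                omega
              rw [hsupp ⟨i, x⟩ ⟨j, y⟩ (Or.inr hjval)]
              ring
            · rw [if_neg hip]
              ring
          · intro i
            by_cases hip : i = p
            · subst hip
              refine ⟨sq, hsqpos, ?_⟩
              have hinv : sq⁻¹ * s = sq := by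
                rw [← hsqsq, ← mul_assoc, inv_mul_cancel₀ (ne_of_gt hsqpos), one_mul]
              ext x y
              show Tp ⟨p, x⟩ ⟨p, y⟩ = (sq • (1 : Matrix (Fin (n p)) (Fin (n p)) ℝ)) x y
              rw [hTpapply, hEapply, if_pos rfl, hblockpp ⟨p, x⟩ ⟨p, y⟩ rfl rfl]
              by_cases hxy : x = y
              · subst hxy
                rw [Matrix.one_apply_eq, if_pos ⟨rfl, rfl⟩, if_pos rfl]
                simp [Matrix.one_apply, hinv]
              · have hne : (⟨p, x⟩ : BIx n) ≠ ⟨p, y⟩ := by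
                  simp [Sigma.ext_iff, hxy]
                rw [Matrix.one_apply_ne hne, if_neg (fun hc => hne hc.1), if_neg hne]
                simp [Matrix.one_apply, hxy]
            · refine ⟨1, one_pos, ?_⟩
              ext x y
              show Tp ⟨i, x⟩ ⟨i, y⟩ = ((1 : ℝ) • (1 : Matrix (Fin (n i)) (Fin (n i)) ℝ)) x y
              rw [hTpapply, hEapply, if_neg (fun hc => hip hc.2), if_neg hip]
              simp [Matrix.one_apply, Sigma.ext_iff]
          · intro i j hij
            by_cases hip : i = p
            · subst hip
              have hblkTp : blk Tp p j = sq⁻¹ • blk X p j := by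
                ext x y
                show Tp ⟨p, x⟩ ⟨j, y⟩ = sq⁻¹ * blk X p j x y
                have hne : (⟨p, x⟩ : BIx n) ≠ ⟨j, y⟩ := fun hc =>
                  (ne_of_lt hij) (congrArg Sigma.fst hc)
                rw [hTpapply, Matrix.one_apply_ne hne, hEapply,
                  if_neg (fun hc => hne hc.1), if_pos rfl]
                show (0 : ℝ) - 0 + sq⁻¹ * X ⟨p, x⟩ ⟨j, y⟩ = sq⁻¹ * X ⟨p, x⟩ ⟨j, y⟩
                ring
              rw [hblkTp]
              exact Submodule.smul_mem _ _ (hV.2 p j (le_of_lt hij))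
            · have hblkTp : blk Tp i j = 0 := by
                ext x y
                show Tp ⟨i, x⟩ ⟨j, y⟩ = (0 : ℝ)
                have hne : (⟨i, x⟩ : BIx n) ≠ ⟨j, y⟩ := fun hc =>
                  (ne_of_lt hij) (congrArg Sigma.fst hc)
                rw [hTpapply, Matrix.one_apply_ne hne, hEapply,
                  if_neg (fun hc => hne hc.1), if_neg hip]
                ring
              rw [hblkTp]
              exact Submodule.zero_mem _
        have hTid : ∀ a b : BIx n, (a.1 : ℕ) < k →
            (S * Tp) a b = (1 : Matrix (BIx n) (BIx n) ℝ) a b := by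
          intro a b ha
          have h2 : (S * Tp) a b = (1 * Tp : Matrix (BIx n) (BIx n) ℝ) a b := by
            rw [Matrix.mul_apply, Matrix.mul_apply]
            exact Finset.sum_congr rfl fun c _ => by rw [hSid a c (by omega)]
          rw [h2, Matrix.one_mul, hTpapply]
          have hap : a.1 ≠ p := fun hc => by
            have hv := congrArg Fin.val hc
            rw [hpk] at hv
            omega
          rw [hEapply, if_neg (fun hc => hap hc.2), if_neg hap]
          ring
        have hES : E * S = E := by
          ext a b
          rw [hE, IB_mul_apply, ← hE, hEapply]
          by_cases hap : a.1 = p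
          · rw [if_pos (by simp [hap])]
            have hak : (a.1 : ℕ) = k := by rw [hap, hpk]
            rw [hSid a b (by omega), Matrix.one_apply]
            by_cases hab : a = b
            · subst hab
              simp [hap]
            · simp [hab]
          · rw [if_neg (by simp [hap])]
            simp [hap]
        have hSE : Sᵀ * E = E := by
          have h := congrArg Matrix.transpose hES
          rwa [Matrix.transpose_mul, hEt] at h
        have hpB : p ∉ B := by
          intro hc
          have h2 : r - m ≤ k := hpk ▸ hB p hc
          omega
        refine ⟨S * Tp, TTpp_mul hdiag hV1 hS hTpmem, hTid, insert p B, ?_, ?_⟩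
        · intro i hi
          rcases Finset.mem_insert.mp hi with h | h
          · rw [h, hpk]
          · exact le_trans (by omega) (hB i h)
        · rw [IB_insert hpB, ← hE, Matrix.mul_add, Matrix.add_mul]
          have hconj : ∀ M : Matrix (BIx n) (BIx n) ℝ,
              (S * Tp)ᵀ * M * (S * Tp) = Tpᵀ * (Sᵀ * M * S) * Tp := by
            intro M
            rw [Matrix.transpose_mul, Matrix.mul_assoc Tpᵀ Sᵀ M,
              Matrix.mul_assoc Tpᵀ (Sᵀ * M) (S * Tp), ← Matrix.mul_assoc (Sᵀ * M) S Tp,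
              ← Matrix.mul_assoc Tpᵀ (Sᵀ * M * S) Tp]
          rw [hconj E, hconj (IB n B)]
          have hSES : Sᵀ * E * S = E := by rw [hSE, hES]
          rw [hSES, ← hX'B]
          have hX'E : X' * E = 0 := by
            ext a b
            rw [hE, mul_IB_apply]
            by_cases hbp : b.1 = p
            · rw [if_pos (by simp [hbp])]
              rw [hX'supp a b (Or.inr (by
                have : (b.1 : ℕ) = k := by rw [hbp, hpk]
                omega))]
              rfl
            · rw [if_neg (by simp [hbp])]
              rfl
          have hX'Tp : X' * Tp = X' := by
            rw [hTp, Matrix.mul_add, Matrix.mul_sub, Matrix.mul_one, hX'E, Matrix.mul_smul,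
              ← Matrix.mul_assoc, hX'E, Matrix.zero_mul]
            simp
          have hTpX' : Tpᵀ * X' = X' := by
            have h := congrArg Matrix.transpose hX'Tp
            rwa [Matrix.transpose_mul, hX'sym] at h
          rw [Matrix.mul_assoc Tpᵀ X' Tp, hX'Tp, hTpX', hX'TpE]
          abel

end Aux4
section Aux5
variable {r : ℕ} {n : Fin r → ℕ}
variable {Vb : ∀ i j : Fin r, Submodule ℝ (Matrix (Fin (n i)) (Fin (n j)) ℝ)}

lemma unconj_conj {T M : Matrix (BIx n) (BIx n) ℝ} (hdet : IsUnit T.det) :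
    Tᵀ * (Tᵀ⁻¹ * M * T⁻¹) * T = M := by
  have hdt : IsUnit Tᵀ.det := by rwa [Matrix.det_transpose]
  rw [Matrix.mul_assoc Tᵀ⁻¹ M T⁻¹, Matrix.mul_nonsing_inv_cancel_left _ _ hdt,
    Matrix.nonsing_inv_mul_cancel_right _ _ hdet]

lemma conj_smul (T M : Matrix (BIx n) (BIx n) ℝ) (c : ℝ) :
    Tᵀ * (c • M) * T = c • (Tᵀ * M * T) := by
  rw [Matrix.mul_smul, Matrix.smul_mul]

lemma blk_conj_single {T M : Matrix (BIx n) (BIx n) ℝ} {i : Fin r}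
    (hM : ∀ a b : BIx n, (a.1 ≠ i ∨ b.1 ≠ i) → M a b = 0) :
    blk (Tᵀ * M * T) i i = (blk T i i)ᵀ * blk M i i * blk T i i := by
  rw [blk_triple]
  rw [Finset.sum_eq_single i]
  · rw [Finset.sum_eq_single i]
    · intro p _ hp
      have h0 : blk M i p = 0 := by
        ext x y
        exact hM _ _ (Or.inr hp)
      rw [h0, Matrix.mul_zero, Matrix.zero_mul]
    · intro h; exact absurd (Finset.mem_univ i) h
  · intro q _ hq
    refine Finset.sum_eq_zero fun p _ => ?_
    have h0 : blk M q p = 0 := by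
      ext x y
      exact hM _ _ (Or.inl hq)
    rw [h0, Matrix.mul_zero, Matrix.zero_mul]
  · intro h; exact absurd (Finset.mem_univ i) h

lemma span_ray (A : Matrix (BIx n) (BIx n) ℝ) :
    Submodule.span ℝ (ray A) = Submodule.span ℝ {A} := by
  apply le_antisymm
  · rw [Submodule.span_le]
    rintro x ⟨c, _, rfl⟩
    exact Submodule.smul_mem _ c (Submodule.mem_span_singleton_self A)
  · apply Submodule.span_mono
    intro x hx
    rw [Set.mem_singleton_iff] at hx
    subst hx
    exact ⟨1, zero_le_one, (one_smul _ _).symm⟩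

lemma KclSet_smul {X : Matrix (BIx n) (BIx n) ℝ} (hX : X ∈ KclSet n Vb) {c : ℝ} (hc : 0 ≤ c) :
    c • X ∈ KclSet n Vb := by
  obtain ⟨hpsd, hsym, hblk⟩ := hX
  refine ⟨psd_smul hpsd hc, ?_, ?_⟩
  · show (c • X)ᵀ = c • X
    rw [Matrix.transpose_smul, hsym]
  · intro i j hij
    rw [blk_smul]
    exact Submodule.smul_mem _ _ (hblk i j hij)

lemma KclSet_zero : (0 : Matrix (BIx n) (BIx n) ℝ) ∈ KclSet n Vb := by
  refine ⟨Matrix.PosSemidef.zero, ?_, ?_⟩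
  · show (0 : Matrix (BIx n) (BIx n) ℝ)ᵀ = 0
    exact Matrix.transpose_zero
  · intro i j _
    rw [blk_zero]
    exact Submodule.zero_mem _

lemma blk_IB_diag {B : Finset (Fin r)} {q : Fin r} (hq : q ∈ B) : blk (IB n B) q q = 1 := by
  ext x y
  show IB n B ⟨q, x⟩ ⟨q, y⟩ = _
  rw [IB_apply]
  by_cases hxy : x = y
  · subst hxy
    simp [hq]
  · rw [if_neg (fun hc => hxy (eq_of_heq (Sigma.ext_iff.mp hc.1).2)),
      Matrix.one_apply_ne hxy]

lemma blk_IB_off {B : Finset (Fin r)} {q l : Fin r} (h : q ≠ l) : blk (IB n B) q l = 0 := by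
  ext x y
  show IB n B ⟨q, x⟩ ⟨l, y⟩ = _
  rw [IB_apply, if_neg (fun hc => h (congrArg Sigma.fst hc.1))]
  rfl

lemma blk_IB_diag_not {B : Finset (Fin r)} {q : Fin r} (hq : q ∉ B) :
    blk (IB n B) q q = 0 := by
  ext x y
  show IB n B ⟨q, x⟩ ⟨q, y⟩ = _
  rw [IB_apply, if_neg (fun hc => hq hc.2)]
  rfl

end Aux5
/-- **Extreme rays of the closure of an Ishi spectrahedral cone.**
A subset `R` of `S^n_+ ∩ V` is an extreme ray of the closed convex cone `S^n_+ ∩ V` if and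
only if `R = ℝ₊·(Tᵀ·I^{{i}}·T)` for some `T ∈ 𝕋₊₊` and some `i ∈ {1,…,r}`. -/
theorem extreme_rays_of_closure (r : ℕ) (hr : 1 ≤ r)
    (n : Fin r → ℕ) (hn : ∀ i, 0 < n i)
    (Vb : ∀ i j : Fin r, Submodule ℝ (Matrix (Fin (n i)) (Fin (n j)) ℝ))
    (hdiag : ∀ i : Fin r, Vb i i = Submodule.span ℝ {(1 : Matrix (Fin (n i)) (Fin (n i)) ℝ)})
    (hV1 : ∀ i j k : Fin r, i ≤ j → j ≤ k → ∀ A ∈ Vb i j, ∀ B ∈ Vb j k, A * B ∈ Vb i k)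
    (hV2 : ∀ i j k : Fin r, i ≤ j → j < k → ∀ A ∈ Vb i j, ∀ B ∈ Vb i k, Aᵀ * B ∈ Vb j k)
    (hV3 : ∀ i j : Fin r, i ≤ j → ∀ A ∈ Vb i j,
      ∃ c : ℝ, Aᵀ * A = c • (1 : Matrix (Fin (n j)) (Fin (n j)) ℝ))
    (R : Set (Matrix (BIx n) (BIx n) ℝ)) (hR : R ⊆ KclSet n Vb) :
    IsExtremeRayOf R (KclSet n Vb) ↔
      ∃ T ∈ TTpp n Vb, ∃ i : Fin r, R = ray (Tᵀ * IB n {i} * T) := by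
  constructor
  · rintro ⟨⟨hne, hsub, hconv, hface⟩, hrank⟩
    -- find a nonzero generator A of R
    obtain ⟨A, hAR, hAne⟩ : ∃ A ∈ R, A ≠ 0 := by
      by_contra h
      push_neg at h
      have hsp : Submodule.span ℝ R ≤ ⊥ := Submodule.span_le.mpr (by
        intro x hx
        simpa using h x hx)
      have h0 : Module.finrank ℝ (Submodule.span ℝ R) = 0 := by
        rw [le_bot_iff.mp hsp]
        exact finrank_bot ℝ _
      omega
    have hAK : A ∈ KclSet n Vb := hR hAR
    -- span R = span {A}
    have hspan : Submodule.span ℝ ({A} : Set (Matrix (BIx n) (BIx n) ℝ))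
        = Submodule.span ℝ R := by
      apply Submodule.eq_of_le_of_finrank_le (Submodule.span_mono (by simpa using hAR))
      rw [hrank, finrank_span_singleton hAne]
    -- R ⊆ ray A
    have hRsub : R ⊆ ray A := by
      intro x hx
      have hx1 : x ∈ Submodule.span ℝ ({A} : Set (Matrix (BIx n) (BIx n) ℝ)) := by
        rw [hspan]
        exact Submodule.subset_span hx
      obtain ⟨c, hc⟩ := Submodule.mem_span_singleton.mp hx1
      have htrA : 0 < A.trace := by
        rcases lt_or_eq_of_le (psd_trace_nonneg hAK.1) with h | h
        · exact h
        · exact absurd (psd_trace_zero hAK.1 h.symm) hAne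
      have htrx : 0 ≤ x.trace := psd_trace_nonneg (hR hx).1
      have htr : x.trace = c * A.trace := by
        rw [← hc, Matrix.trace_smul, smul_eq_mul]
      have hcnn : 0 ≤ c := by nlinarith
      exact ⟨c, hcnn, hc.symm⟩
    -- ray A ⊆ R
    have h0K : (0 : Matrix (BIx n) (BIx n) ℝ) ∈ KclSet n Vb := KclSet_zero
    have hraysub : ray A ⊆ R := by
      rintro x ⟨c, hc0, rfl⟩
      rcases eq_or_lt_of_le hc0 with hc | hc
      · rw [← hc, zero_smul]
        have h2 : ((2:ℝ) • A) ∈ KclSet n Vb := KclSet_smul hAK (by norm_num)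
        have heq : (1/2 : ℝ) • ((2:ℝ) • A) + (1 - 1/2 : ℝ) • (0 : Matrix (BIx n) (BIx n) ℝ)
            = A := by
          rw [smul_zero, add_zero, smul_smul]
          norm_num
        exact (hface _ h2 _ h0K ⟨1/2, by norm_num, by norm_num, by rw [heq]; exact hAR⟩).2
      · by_cases hc1 : c = 1
        · rw [hc1, one_smul]
          exact hAR
        have h1 : (c • A) ∈ KclSet n Vb := KclSet_smul hAK hc0
        rcases lt_or_gt_of_ne hc1 with hlt | hgt
        · have h2 : ((2:ℝ) • A) ∈ KclSet n Vb := KclSet_smul hAK (by norm_num)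
          have heq : (1/(2-c) : ℝ) • (c • A) + (1 - 1/(2-c) : ℝ) • ((2:ℝ) • A) = A := by
            rw [smul_smul, smul_smul, ← add_smul]
            have h3 : (1/(2-c)) * c + (1 - 1/(2-c)) * 2 = 1 := by
              have : (2:ℝ) - c ≠ 0 := by linarith
              field_simp
              ring
            rw [h3, one_smul]
          refine (hface _ h1 _ h2 ⟨1/(2-c), ?_, ?_, by rw [heq]; exact hAR⟩).1
          · exact one_div_pos.mpr (by linarith)
          · rw [div_lt_one (by linarith)]
            linarith
        · have heq : (1/c : ℝ) • (c • A) + (1 - 1/c : ℝ) • (0 : Matrix (BIx n) (BIx n) ℝ)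
              = A := by
            rw [smul_zero, add_zero, smul_smul, one_div, inv_mul_cancel₀ (by linarith), one_smul]
          refine (hface _ h1 _ h0K ⟨1/c, by positivity, ?_, by rw [heq]; exact hAR⟩).1
          rw [div_lt_one (by linarith)]
          linarith
    have hReq : R = ray A := Set.Subset.antisymm hRsub hraysub
    -- Cholesky decomposition of A
    obtain ⟨T, hT, _, B, hBge, hAB⟩ := cholesky hn hdiag hV1 hV2 hV3 r A hAK.1 hAK.2
      (fun a b h => absurd h (by omega))
    have hBne : B.Nonempty := by
      rcases Finset.eq_empty_or_nonempty B with h | h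
      · subst h
        rw [IB_empty, Matrix.mul_zero, Matrix.zero_mul] at hAB
        exact absurd hAB hAne
      · exact h
    obtain ⟨i, hiB⟩ := hBne
    refine ⟨T, hT, i, ?_⟩
    by_cases hBi : B = {i}
    · rw [hReq, hAB, hBi]
    · exfalso
      have hjne : (B.erase i).Nonempty := by
        rcases Finset.eq_empty_or_nonempty (B.erase i) with h | h
        · rcases (Finset.erase_eq_empty_iff B i).mp h with h2 | h2
          · rw [h2] at hiB
            exact absurd hiB (Finset.notMem_empty i)
          · exact absurd h2 hBi
        · exact h
      obtain ⟨j, hjB⟩ := hjne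
      have hj : j ≠ i := Finset.ne_of_mem_erase hjB
      have hjBmem : j ∈ B := Finset.mem_of_mem_erase hjB
      have hBsplit : IB n B = IB n {i} + IB n (B.erase i) := by
        conv_lhs => rw [show B = insert i (B.erase i) from (Finset.insert_erase hiB).symm]
        exact IB_insert (Finset.notMem_erase i B)
      have hAsum : A = Tᵀ * IB n {i} * T + Tᵀ * IB n (B.erase i) * T := by
        rw [hAB, hBsplit, Matrix.mul_add, Matrix.add_mul]
      have hA1K : Tᵀ * IB n {i} * T ∈ KclSet n Vb :=
        ⟨conj_IB_psd T _, conj_IB_mem_Vset hdiag hV2 hV3 hT _⟩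
      have hA2K : Tᵀ * IB n (B.erase i) * T ∈ KclSet n Vb :=
        ⟨conj_IB_psd T _, conj_IB_mem_Vset hdiag hV2 hV3 hT _⟩
      have heq : (1/2 : ℝ) • ((2:ℝ) • (Tᵀ * IB n {i} * T))
          + (1 - 1/2 : ℝ) • ((2:ℝ) • (Tᵀ * IB n (B.erase i) * T)) = A := by
        rw [smul_smul, smul_smul, hAsum]
        norm_num
      have hmem := (hface ((2:ℝ) • (Tᵀ * IB n {i} * T)) (KclSet_smul hA1K (by norm_num))
        ((2:ℝ) • (Tᵀ * IB n (B.erase i) * T)) (KclSet_smul hA2K (by norm_num))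
        ⟨1/2, by norm_num, by norm_num, by rw [heq]; exact hAR⟩).1
      rw [hReq] at hmem
      obtain ⟨γ, hγ0, hγeq⟩ := hmem
      have hcan : (2:ℝ) • IB n ({i} : Finset (Fin r)) = γ • IB n B := by
        apply conj_cancel (TTpp_det_isUnit hT)
        rw [conj_smul, conj_smul, ← hAB]
        exact hγeq
      have hent := congrFun (congrFun hcan ⟨j, ⟨0, hn j⟩⟩) ⟨j, ⟨0, hn j⟩⟩
      have hγz : γ = 0 := by
        simp [IB_apply, hj, hjBmem] at hent
        linarith
      have hzero : (2:ℝ) • IB n ({i} : Finset (Fin r)) = 0 := by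
        rw [hcan, hγz, zero_smul]
      have hent2 := congrFun (congrFun hzero ⟨i, ⟨0, hn i⟩⟩) ⟨i, ⟨0, hn i⟩⟩
      rw [Matrix.smul_apply, IB_apply, if_pos ⟨rfl, Finset.mem_singleton_self i⟩] at hent2
      norm_num at hent2
  · rintro ⟨T, hT, i, rfl⟩
    have hdet := TTpp_det_isUnit hT
    have hAK : Tᵀ * IB n {i} * T ∈ KclSet n Vb :=
      ⟨conj_IB_psd T _, conj_IB_mem_Vset hdiag hV2 hV3 hT _⟩
    obtain ⟨cT, hcT, hcTT⟩ := hT.2.1 i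
    have hAblk : blk (Tᵀ * IB n {i} * T) i i = (cT * cT) • 1 := by
      rw [blk_conj_IB, Finset.sum_eq_single i]
      · rw [if_pos (Finset.mem_singleton_self i), hcTT, Matrix.transpose_smul,
          Matrix.smul_mul, Matrix.mul_smul, smul_smul, Matrix.transpose_one, Matrix.one_mul]
      · intro q _ hq
        rw [if_neg (by simp [hq])]
      · intro h; exact absurd (Finset.mem_univ i) h
    have hAne : Tᵀ * IB n {i} * T ≠ 0 := by
      intro hc
      rw [hc, blk_zero] at hAblk
      have hent := congrFun (congrFun hAblk ⟨0, hn i⟩) ⟨0, hn i⟩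
      rw [Matrix.zero_apply, Matrix.smul_apply, Matrix.one_apply_eq, smul_eq_mul, mul_one] at hent
      nlinarith
    -- the key extremality step
    have main : ∀ (c : ℝ), 0 < c → ∀ (u v : ℝ) (w z : Matrix (BIx n) (BIx n) ℝ), 0 < u → 0 < v →
        w ∈ KclSet n Vb → z ∈ KclSet n Vb →
        u • w + v • z = c • (Tᵀ * IB n {i} * T) → w ∈ ray (Tᵀ * IB n {i} * T) := by
      intro c hc u v w z hu hv hw hz hsum
      have hdt : IsUnit Tᵀ.det := by rwa [Matrix.det_transpose]
      have hw' : (Tᵀ⁻¹ * w * T⁻¹).PosSemidef := by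
        have h := hw.1.conjTranspose_mul_mul_same T⁻¹
        rw [Matrix.conjTranspose_eq_transpose_of_trivial, Matrix.transpose_nonsing_inv] at h
        exact h
      have hz' : (Tᵀ⁻¹ * z * T⁻¹).PosSemidef := by
        have h := hz.1.conjTranspose_mul_mul_same T⁻¹
        rw [Matrix.conjTranspose_eq_transpose_of_trivial, Matrix.transpose_nonsing_inv] at h
        exact h
      have hsum' : u • (Tᵀ⁻¹ * w * T⁻¹) + v • (Tᵀ⁻¹ * z * T⁻¹) = c • IB n {i} := by
        have h := congrArg (fun Z => Tᵀ⁻¹ * Z * T⁻¹) hsum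
        rw [Matrix.mul_add, Matrix.add_mul, Matrix.mul_smul, Matrix.mul_smul, Matrix.smul_mul,
          Matrix.smul_mul, Matrix.mul_smul, Matrix.smul_mul, conj_unconj hdet] at h
        exact h
      have hdiag0 : ∀ a : BIx n, a.1 ≠ i → (Tᵀ⁻¹ * w * T⁻¹) a a = 0 := by
        intro a ha
        have h := congrFun (congrFun hsum' a) a
        rw [Matrix.add_apply, Matrix.smul_apply, Matrix.smul_apply, Matrix.smul_apply,
          IB_apply, if_neg (fun hc' => ha (Finset.mem_singleton.mp hc'.2))] at h
        have h1 := psd_diag_nonneg hw' a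
        have h2 := psd_diag_nonneg hz' a
        simp only [smul_eq_mul, smul_zero] at h
        nlinarith
      have hsupp : ∀ a b : BIx n, (a.1 ≠ i ∨ b.1 ≠ i) → (Tᵀ⁻¹ * w * T⁻¹) a b = 0 := by
        intro a b hab
        rcases hab with h | h
        · exact psd_row_zero hw' (hdiag0 a h) b
        · exact psd_col_zero hw' (hdiag0 b h) a
      have hwrec : w = Tᵀ * (Tᵀ⁻¹ * w * T⁻¹) * T := (unconj_conj hdet).symm
      obtain ⟨γ, hγ⟩ := Submodule.mem_span_singleton.mp ((hdiag i) ▸ hw.2.2 i i le_rfl)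
      have hblkw : blk w i i = (cT * cT) • blk (Tᵀ⁻¹ * w * T⁻¹) i i := by
        conv_lhs => rw [hwrec]
        rw [blk_conj_single hsupp, hcTT]
        simp [Matrix.smul_mul, Matrix.mul_smul, smul_smul, Matrix.transpose_smul,
          Matrix.transpose_one]
      have hcTne : cT * cT ≠ 0 := by positivity
      have hblkw' : blk (Tᵀ⁻¹ * w * T⁻¹) i i = ((cT * cT)⁻¹ * γ) • 1 := by
        have h := hblkw
        rw [← hγ] at h
        have h2 := congrArg (fun M => ((cT * cT)⁻¹ : ℝ) • M) h
        simp only [smul_smul, inv_mul_cancel₀ hcTne, one_smul] at h2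
        exact h2.symm
      have hμ0 : 0 ≤ (cT * cT)⁻¹ * γ := by
        have h3 := psd_diag_nonneg hw' ⟨i, ⟨0, hn i⟩⟩
        have h5 := congrFun (congrFun hblkw' ⟨0, hn i⟩) ⟨0, hn i⟩
        rw [Matrix.smul_apply, Matrix.one_apply_eq, smul_eq_mul, mul_one] at h5
        have h4 : (Tᵀ⁻¹ * w * T⁻¹) ⟨i, ⟨0, hn i⟩⟩ ⟨i, ⟨0, hn i⟩⟩ = (cT * cT)⁻¹ * γ := h5
        rwa [h4] at h3
      have hw'eq : Tᵀ⁻¹ * w * T⁻¹ = ((cT * cT)⁻¹ * γ) • IB n {i} := by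
        apply blk_ext
        intro j l
        rw [blk_smul]
        by_cases hj : j = i
        · subst hj
          by_cases hl : l = j
          · subst hl
            rw [hblkw', blk_IB_diag (Finset.mem_singleton_self _)]
          · have h0 : blk (Tᵀ⁻¹ * w * T⁻¹) j l = 0 := by
              ext x y
              exact hsupp _ _ (Or.inr hl)
            rw [h0, blk_IB_off (Ne.symm hl), smul_zero]
        · have h0 : blk (Tᵀ⁻¹ * w * T⁻¹) j l = 0 := by
            ext x y
            exact hsupp _ _ (Or.inl hj)
          rw [h0]
          by_cases hl : j = l
          · subst hl
            rw [blk_IB_diag_not (by simpa using hj), smul_zero]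
          · rw [blk_IB_off hl, smul_zero]
      refine ⟨(cT * cT)⁻¹ * γ, hμ0, ?_⟩
      rw [hwrec, hw'eq, conj_smul]
    refine ⟨⟨⟨Tᵀ * IB n {i} * T, 1, zero_le_one, (one_smul _ _).symm⟩, ?_, ?_, ?_⟩, ?_⟩
    · rintro x ⟨c, hc, rfl⟩
      exact KclSet_smul hAK hc
    · rintro x ⟨c1, h1, rfl⟩ y ⟨c2, h2, rfl⟩ a b ha hb hab
      exact ⟨a * c1 + b * c2, by positivity, by
        rw [smul_smul, smul_smul, ← add_smul]⟩
    · rintro x hx y hy ⟨t, ht0, ht1, c, hc0, hcomb⟩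
      rcases eq_or_lt_of_le hc0 with hc | hc
      · -- c = 0 : both endpoints vanish
        rw [← hc, zero_smul] at hcomb
        have htr : t * x.trace + (1 - t) * y.trace = 0 := by
          have h := congrArg Matrix.trace hcomb
          rwa [Matrix.trace_add, Matrix.trace_smul, Matrix.trace_smul, Matrix.trace_zero,
            smul_eq_mul, smul_eq_mul] at h
        have htx : 0 ≤ x.trace := psd_trace_nonneg hx.1
        have hty : 0 ≤ y.trace := psd_trace_nonneg hy.1
        have hxtr : x.trace = 0 := by nlinarith
        have hytr : y.trace = 0 := by nlinarith
        rw [psd_trace_zero hx.1 hxtr, psd_trace_zero hy.1 hytr]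
        exact ⟨⟨0, le_rfl, (zero_smul _ _).symm⟩, ⟨0, le_rfl, (zero_smul _ _).symm⟩⟩
      · constructor
        · exact main c hc t (1 - t) x y ht0 (by linarith) hx hy hcomb
        · refine main c hc (1 - t) t y x (by linarith) ht0 hy hx ?_
          rw [add_comm]
          exact hcomb
    · rw [span_ray, finrank_span_singleton hAne]
end
end

section
/- Every matrix X in S^n_+ ∩ V can be written as a sum of at most r matrices each of which lies on an extreme ray of S^n_+ ∩ V; more precisely, every matrix in the relative interior of a face F_{T,B} (T ∈ 𝕋_++, B ⊆ {1,…,r} nonempty) is a sum of at most |B| matrices each lying on an extreme ray of S^n_+ ∩ V. In particular the Carathéodory number of S^n_+ ∩ V is at most r. -/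
noncomputable section
open scoped Classical
open Matrix

variable {r : ℕ}

namespace IshiAux

/-! ### Generic real-matrix PSD helpers -/

lemma ctr {a b : Type*} [Fintype a] [Fintype b] (A : Matrix a b ℝ) : Aᴴ = Aᵀ := by
  ext i j; simp [Matrix.conjTranspose_apply]

lemma psd_gram {a b : Type*} [Fintype a] [Fintype b] (C : Matrix a b ℝ) :
    (Cᵀ * C).PosSemidef := by
  rw [← ctr]; exact Matrix.posSemidef_conjTranspose_mul_self C

lemma psd_iff {ι : Type*} [Fintype ι] [DecidableEq ι] {M : Matrix ι ι ℝ} :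
    M.PosSemidef ↔ ∃ C : Matrix ι ι ℝ, M = Cᵀ * C := by
  rw [show M.PosSemidef ↔ ∃ B : Matrix ι ι ℝ, M = Bᴴ * B from by
    open scoped MatrixOrder in
    exact ⟨fun hA => by
      obtain ⟨X, hX, -, rfl⟩ := CFC.exists_sqrt_of_isSelfAdjoint_of_quasispectrumRestricts
        hA.isHermitian (QuasispectrumRestricts.nnreal_of_nonneg hA.nonneg)
      exact ⟨X, by rw [← Matrix.star_eq_conjTranspose, hX.star_eq]⟩,
      fun ⟨B, hB⟩ => hB ▸ posSemidef_conjTranspose_mul_self B⟩]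
  constructor
  · rintro ⟨B, hB⟩; exact ⟨B, by rw [hB, ctr]⟩
  · rintro ⟨C, hC⟩; exact ⟨C, by rw [hC, ctr]⟩

lemma psd_diag_nonneg {ι : Type*} [Fintype ι] [DecidableEq ι] {M : Matrix ι ι ℝ}
    (h : M.PosSemidef) (p : ι) : 0 ≤ M p p := by
  obtain ⟨C, rfl⟩ := psd_iff.mp h
  rw [Matrix.mul_apply]
  exact Finset.sum_nonneg fun s _ => by rw [Matrix.transpose_apply]; exact mul_self_nonneg _

lemma psd_row_eq_zero {ι : Type*} [Fintype ι] [DecidableEq ι] {M : Matrix ι ι ℝ}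
    (h : M.PosSemidef) (p : ι) (hd : M p p = 0) (q : ι) : M p q = 0 ∧ M q p = 0 := by
  obtain ⟨C, rfl⟩ := psd_iff.mp h
  rw [Matrix.mul_apply] at hd
  have hc : ∀ s : ι, C s p = 0 := by
    intro s
    have h0 := (Finset.sum_eq_zero_iff_of_nonneg
      (fun i _ => by rw [Matrix.transpose_apply]; exact mul_self_nonneg (C i p))).mp hd s
      (Finset.mem_univ s)
    rw [Matrix.transpose_apply] at h0
    exact mul_self_eq_zero.mp h0
  constructor
  · rw [Matrix.mul_apply]; exact Finset.sum_eq_zero fun s _ => by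
      rw [Matrix.transpose_apply, hc s, zero_mul]
  · rw [Matrix.mul_apply]; exact Finset.sum_eq_zero fun s _ => by
      rw [Matrix.transpose_apply, hc s, mul_zero]

lemma psd_conj {ι : Type*} [Fintype ι] [DecidableEq ι] {M : Matrix ι ι ℝ}
    (h : M.PosSemidef) (W : Matrix ι ι ℝ) : (Wᵀ * M * W).PosSemidef := by
  obtain ⟨C, rfl⟩ := psd_iff.mp h
  have : Wᵀ * (Cᵀ * C) * W = (C * W)ᵀ * (C * W) := by
    rw [Matrix.transpose_mul]; simp only [Matrix.mul_assoc]
  rw [this]; exact psd_gram _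

lemma psd_smul {ι : Type*} [Fintype ι] [DecidableEq ι] {M : Matrix ι ι ℝ}
    (h : M.PosSemidef) {c : ℝ} (hc : 0 ≤ c) : (c • M).PosSemidef := by
  obtain ⟨C, rfl⟩ := psd_iff.mp h
  have : c • (Cᵀ * C) = (Real.sqrt c • C)ᵀ * (Real.sqrt c • C) := by
    rw [Matrix.transpose_smul, Matrix.smul_mul, Matrix.mul_smul, smul_smul,
      Real.mul_self_sqrt hc]
  rw [this]; exact psd_gram _


variable {r : ℕ} {n : Fin r → ℕ}

/-! ### Block lemmas -/

lemma blk_entry (X : Matrix (BIx n) (BIx n) ℝ) (i j : Fin r) (a : Fin (n i)) (b : Fin (n j)) :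
    blk X i j a b = X ⟨i, a⟩ ⟨j, b⟩ := rfl

lemma blk_transpose (X : Matrix (BIx n) (BIx n) ℝ) (i j : Fin r) :
    blk Xᵀ i j = (blk X j i)ᵀ := rfl

lemma blk_smul (X : Matrix (BIx n) (BIx n) ℝ) (c : ℝ) (i j : Fin r) :
    blk (c • X) i j = c • blk X i j := rfl

lemma blk_sub (X Y : Matrix (BIx n) (BIx n) ℝ) (i j : Fin r) :
    blk (X - Y) i j = blk X i j - blk Y i j := rfl

lemma sum_block (i : Fin r) (f : BIx n → ℝ) :
    ∑ s : BIx n, (if s.1 = i then f s else 0) = ∑ b : Fin (n i), f ⟨i, b⟩ := by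
  rw [← Finset.univ_sigma_univ, Finset.sum_sigma]
  rw [Finset.sum_eq_single i]
  · simp
  · intro k _ hk; exact Finset.sum_eq_zero fun b _ => by simp [hk]
  · intro h; exact absurd (Finset.mem_univ i) h

lemma blk_mul (X Y : Matrix (BIx n) (BIx n) ℝ) (i j : Fin r) :
    blk (X * Y) i j = ∑ k : Fin r, blk X i k * blk Y k j := by
  ext a b
  rw [blk_entry, Matrix.mul_apply, ← Finset.univ_sigma_univ, Finset.sum_sigma,
    Matrix.sum_apply]
  exact Finset.sum_congr rfl fun k _ => by rw [Matrix.mul_apply]; rfl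

/-! ### `IB` (block projector) lemmas -/

lemma IB_apply_same (i : Fin r) (a b : Fin (n i)) :
    IB n {i} ⟨i, a⟩ ⟨i, b⟩ = if a = b then 1 else 0 := by
  simp [IB, Sigma.mk.inj_iff]

lemma IB_apply_ne {i : Fin r} {p q : BIx n} (h : p.1 ≠ i ∨ q.1 ≠ i) :
    IB n {i} p q = 0 := by
  by_cases hpq : p = q
  · subst hpq; rcases h with h | h <;> simp [IB, h]
  · simp [IB, hpq]

lemma IB_mul_apply (i : Fin r) (X : Matrix (BIx n) (BIx n) ℝ) (p q : BIx n) :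
    (IB n {i} * X) p q = if p.1 = i then X p q else 0 := by
  rw [Matrix.mul_apply]
  by_cases hp : p.1 = i
  · rw [if_pos hp, Finset.sum_eq_single p]
    · simp [IB, hp]
    · intro s _ hs
      have h0 : IB n {i} p s = 0 := by
        simp only [IB, Matrix.of_apply, ite_eq_right_iff]
        rintro ⟨rfl, -⟩; exact absurd rfl hs
      rw [h0, zero_mul]
    · intro h; exact absurd (Finset.mem_univ p) h
  · rw [if_neg hp]
    exact Finset.sum_eq_zero fun s _ => by rw [IB_apply_ne (Or.inl hp), zero_mul]

lemma mul_IB_apply (i : Fin r) (X : Matrix (BIx n) (BIx n) ℝ) (p q : BIx n) :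
    (X * IB n {i}) p q = if q.1 = i then X p q else 0 := by
  rw [Matrix.mul_apply]
  by_cases hq : q.1 = i
  · rw [if_pos hq, Finset.sum_eq_single q]
    · simp [IB, hq]
    · intro s _ hs
      have h0 : IB n {i} s q = 0 := by
        simp only [IB, Matrix.of_apply, ite_eq_right_iff]
        rintro ⟨rfl, -⟩; exact absurd rfl hs
      rw [h0, mul_zero]
    · intro h; exact absurd (Finset.mem_univ q) h
  · rw [if_neg hq]
    exact Finset.sum_eq_zero fun s _ => by rw [IB_apply_ne (Or.inr hq), mul_zero]

lemma IB_transpose (i : Fin r) : (IB n {i})ᵀ = IB n {i} := by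
  ext p q
  rw [Matrix.transpose_apply]
  by_cases hpq : p = q
  · subst hpq; rfl
  · simp [IB, hpq, Ne.symm hpq]

lemma IB_mul_IB (i : Fin r) : IB n {i} * IB n {i} = IB n {i} := by
  ext p q
  rw [IB_mul_apply]
  by_cases hp : p.1 = i
  · rw [if_pos hp]
  · rw [if_neg hp, IB_apply_ne (Or.inl hp)]


variable {Vb : ∀ i j : Fin r, Submodule ℝ (Matrix (Fin (n i)) (Fin (n j)) ℝ)}

/-- A "good row" at block index `i`: supported on block row `i`, strictly lower blocks zero,
positive scalar pivot, and all blocks in the corresponding `Vb` subspaces. -/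
def GoodRow (n : Fin r → ℕ) (Vb : ∀ i j : Fin r, Submodule ℝ (Matrix (Fin (n i)) (Fin (n j)) ℝ))
    (i : Fin r) (R : Matrix (BIx n) (BIx n) ℝ) : Prop :=
  (∀ p q : BIx n, p.1 ≠ i → R p q = 0) ∧
  (∃ c : ℝ, 0 < c ∧ blk R i i = c • 1) ∧
  (∀ j : Fin r, blk R i j ∈ Vb i j) ∧
  (∀ j : Fin r, j < i → blk R i j = 0)

lemma rowSuppT_mul_apply {i : Fin r} {R : Matrix (BIx n) (BIx n) ℝ}
    (h : ∀ p q : BIx n, p.1 ≠ i → R p q = 0) (X : Matrix (BIx n) (BIx n) ℝ) (p q : BIx n) :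
    (Rᵀ * X) p q = ∑ b : Fin (n i), R ⟨i, b⟩ p * X ⟨i, b⟩ q := by
  rw [Matrix.mul_apply, ← sum_block i (fun s => R s p * X s q)]
  refine Finset.sum_congr rfl fun s _ => ?_
  rw [Matrix.transpose_apply]
  by_cases hs : s.1 = i
  · rw [if_pos hs]
  · rw [if_neg hs, h s p hs, zero_mul]

lemma blk_gram {i : Fin r} {R : Matrix (BIx n) (BIx n) ℝ}
    (h : ∀ p q : BIx n, p.1 ≠ i → R p q = 0) (j k : Fin r) :
    blk (Rᵀ * R) j k = (blk R i j)ᵀ * blk R i k := by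
  ext a b
  rw [blk_entry, rowSuppT_mul_apply h, Matrix.mul_apply]
  rfl

lemma Vset_smul {X : Matrix (BIx n) (BIx n) ℝ} (h : X ∈ Vset n Vb) (c : ℝ) :
    c • X ∈ Vset n Vb := by
  refine ⟨?_, fun i j hij => ?_⟩
  · show (c • X)ᵀ = c • X
    rw [Matrix.transpose_smul, h.1]
  · rw [blk_smul]; exact Submodule.smul_mem _ _ (h.2 i j hij)

lemma KclSet_smul {X : Matrix (BIx n) (BIx n) ℝ} (h : X ∈ KclSet n Vb) {c : ℝ} (hc : 0 ≤ c) :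
    c • X ∈ KclSet n Vb :=
  ⟨psd_smul h.1 hc, Vset_smul h.2 c⟩

/-- The Gram matrix of a good row lies in the closed cone. -/
lemma gram_mem_KclSet
    (hdiag : ∀ i : Fin r, Vb i i = Submodule.span ℝ {(1 : Matrix (Fin (n i)) (Fin (n i)) ℝ)})
    (hV2 : ∀ i j k : Fin r, i ≤ j → j < k → ∀ A ∈ Vb i j, ∀ B ∈ Vb i k, Aᵀ * B ∈ Vb j k)
    (hV3 : ∀ i j : Fin r, i ≤ j → ∀ A ∈ Vb i j,
      ∃ c : ℝ, Aᵀ * A = c • (1 : Matrix (Fin (n j)) (Fin (n j)) ℝ))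
    {i : Fin r} {R : Matrix (BIx n) (BIx n) ℝ} (hG : GoodRow n Vb i R) :
    Rᵀ * R ∈ KclSet n Vb := by
  refine ⟨psd_gram R, ?_, fun j k hjk => ?_⟩
  · show (Rᵀ * R)ᵀ = Rᵀ * R
    rw [Matrix.transpose_mul, Matrix.transpose_transpose]
  · rw [blk_gram hG.1]
    rcases lt_or_ge j i with hji | hij
    · rw [hG.2.2.2 j hji]
      simp only [Matrix.transpose_zero, Matrix.zero_mul]
      exact Submodule.zero_mem _
    · rcases eq_or_lt_of_le hjk with rfl | hjk'
      · obtain ⟨d, hd⟩ := hV3 i j hij (blk R i j) (hG.2.2.1 j)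
        rw [hd, hdiag j]
        exact Submodule.smul_mem _ _ (Submodule.mem_span_singleton_self _)
      · exact hV2 i j k hij hjk' _ (hG.2.2.1 j) _ (hG.2.2.1 k)

/-- Core extremality computation: if `x + z = κ • RᵀR` with `x, z` PSD, `x ∈ V`, and `R` a good
row, then `x` is a nonnegative multiple of `RᵀR`. -/
lemma crux
    (hn : ∀ i, 0 < n i)
    (hdiag : ∀ i : Fin r, Vb i i = Submodule.span ℝ {(1 : Matrix (Fin (n i)) (Fin (n i)) ℝ)})
    {i : Fin r} {R : Matrix (BIx n) (BIx n) ℝ} (hG : GoodRow n Vb i R)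
    {x z : Matrix (BIx n) (BIx n) ℝ} (κ : ℝ)
    (hx : x.PosSemidef) (hxV : x ∈ Vset n Vb) (hz : z.PosSemidef)
    (heq : x + z = κ • (Rᵀ * R)) :
    ∃ μ : ℝ, 0 ≤ μ ∧ x = μ • (Rᵀ * R) := by
  classical
  obtain ⟨c, hc, hpivot⟩ := hG.2.1
  set E : Matrix (BIx n) (BIx n) ℝ := IB n {i} with hE
  set N : Matrix (BIx n) (BIx n) ℝ := R - c • E with hNdef
  -- support of N
  have hNsupp : ∀ p q : BIx n, ¬(p.1 = i ∧ i < q.1) → N p q = 0 := by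
    rintro ⟨pi, pa⟩ ⟨qi, qb⟩ h
    by_cases hp : pi = i
    · subst hp
      have hq : ¬ pi < qi := fun hlt => h ⟨rfl, hlt⟩
      rcases lt_or_ge qi pi with hlt | hle
      · have hR0 : R ⟨pi, pa⟩ ⟨qi, qb⟩ = 0 := by
          have := hG.2.2.2 qi hlt
          exact congrFun (congrFun this pa) qb
        have hE0 : E ⟨pi, pa⟩ ⟨qi, qb⟩ = 0 :=
          IB_apply_ne (Or.inr (by simpa using hlt.ne))
        simp [hNdef, hR0, hE0]
      · have hqi : qi = pi := le_antisymm (le_of_not_gt hq) hle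
        subst hqi
        have hR : R ⟨qi, pa⟩ ⟨qi, qb⟩ = c * (if pa = qb then 1 else 0) := by
          have := congrFun (congrFun hpivot pa) qb
          simpa [Matrix.one_apply, blk_entry] using this
        have hEpq : E ⟨qi, pa⟩ ⟨qi, qb⟩ = (if pa = qb then 1 else 0) := IB_apply_same qi pa qb
        simp [hNdef, hR, hEpq, mul_ite]
    · have hR0 : R ⟨pi, pa⟩ ⟨qi, qb⟩ = 0 := hG.1 _ _ hp
      have hE0 : E ⟨pi, pa⟩ ⟨qi, qb⟩ = 0 := IB_apply_ne (Or.inl hp)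
      simp [hNdef, hR0, hE0]
  have hNE : N * E = 0 := by
    ext p q
    rw [mul_IB_apply]
    by_cases hq : q.1 = i
    · rw [if_pos hq, hNsupp p q (by rw [hq]; rintro ⟨-, h⟩; exact lt_irrefl i h)]; rfl
    · rw [if_neg hq]; rfl
  have hEN : E * N = N := by
    ext p q
    rw [IB_mul_apply]
    by_cases hp : p.1 = i
    · rw [if_pos hp]
    · rw [if_neg hp, hNsupp p q (fun h => hp h.1)]
  have hNN : N * N = 0 := by
    ext p q
    rw [Matrix.mul_apply]
    refine Finset.sum_eq_zero fun s _ => ?_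
    by_cases hs : s.1 = i
    · rw [hNsupp p s (by rw [hs]; rintro ⟨-, h⟩; exact lt_irrefl i h), zero_mul]
    · rw [hNsupp s q (fun h => hs h.1), mul_zero]
  have hEE : E * E = E := IB_mul_IB i
  have hET : Eᵀ = E := IB_transpose i
  have hR : R = c • E + N := by rw [hNdef]; abel
  set U : Matrix (BIx n) (BIx n) ℝ := 1 - c⁻¹ • N with hU
  set W : Matrix (BIx n) (BIx n) ℝ := 1 + c⁻¹ • N with hW
  have hUW : U * W = 1 := by
    rw [hU, hW, Matrix.sub_mul, Matrix.one_mul, Matrix.mul_add, Matrix.mul_one,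
      Matrix.smul_mul, Matrix.mul_smul, hNN]
    simp
  have hWU : W * U = 1 := by
    rw [hU, hW, Matrix.add_mul, Matrix.one_mul, Matrix.mul_sub, Matrix.mul_one,
      Matrix.smul_mul, Matrix.mul_smul, hNN]
    simp
  have hRU : R * U = c • E := by
    rw [hR, hU, Matrix.add_mul, Matrix.mul_sub, Matrix.mul_sub, Matrix.mul_one, Matrix.mul_one,
      Matrix.smul_mul, Matrix.mul_smul, Matrix.mul_smul, hEN, hNN, smul_smul,
      mul_inv_cancel₀ hc.ne', one_smul]
    simp only [smul_zero, sub_zero]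
    abel
  -- sandwich identity
  have hsandwich : ∀ M : Matrix (BIx n) (BIx n) ℝ, Wᵀ * (Uᵀ * M * U) * W = M := by
    intro M
    calc Wᵀ * (Uᵀ * M * U) * W = (Wᵀ * Uᵀ) * M * (U * W) := by
          simp only [Matrix.mul_assoc]
      _ = M := by
          rw [← Matrix.transpose_mul, hUW, Matrix.transpose_one, Matrix.one_mul, Matrix.mul_one]
  have hAU : Uᵀ * (Rᵀ * R) * U = (c * c) • E := by
    have h1 : Uᵀ * (Rᵀ * R) * U = (R * U)ᵀ * (R * U) := by
      rw [Matrix.transpose_mul]; simp only [Matrix.mul_assoc]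
    rw [h1, hRU, Matrix.transpose_smul, hET, Matrix.smul_mul, Matrix.mul_smul, hEE, smul_smul]
  set xt : Matrix (BIx n) (BIx n) ℝ := Uᵀ * x * U with hxt
  set zt : Matrix (BIx n) (BIx n) ℝ := Uᵀ * z * U with hzt
  have hxtpsd : xt.PosSemidef := psd_conj hx U
  have hztpsd : zt.PosSemidef := psd_conj hz U
  have heqt : xt + zt = (κ * (c * c)) • E := by
    have hdist : Uᵀ * (x + z) * U = xt + zt := by
      rw [Matrix.mul_add, Matrix.add_mul]
    rw [← hdist, heq, Matrix.mul_smul, Matrix.smul_mul, hAU, smul_smul]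
  -- off-block entries of xt vanish
  have hdiag0 : ∀ p : BIx n, p.1 ≠ i → xt p p = 0 := by
    intro p hp
    have h1 := congrFun (congrFun heqt p) p
    have hEpp : E p p = 0 := IB_apply_ne (Or.inl hp)
    rw [Matrix.add_apply, Matrix.smul_apply, hEpp, smul_zero] at h1
    have h2 := psd_diag_nonneg hxtpsd p
    have h3 := psd_diag_nonneg hztpsd p
    linarith
  have hxtsupp : ∀ p q : BIx n, p.1 ≠ i ∨ q.1 ≠ i → xt p q = 0 := by
    intro p q h
    rcases h with h | h
    · exact (psd_row_eq_zero hxtpsd p (hdiag0 p h) q).1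
    · exact (psd_row_eq_zero hxtpsd q (hdiag0 q h) p).2
  -- the (i,i) block of x is a scalar
  obtain ⟨e, he⟩ : ∃ e : ℝ, blk x i i = e • 1 := by
    have hmem := hxV.2 i i le_rfl
    rw [hdiag i] at hmem
    obtain ⟨e, he⟩ := Submodule.mem_span_singleton.mp hmem
    exact ⟨e, he.symm⟩
  have he0 : 0 ≤ e := by
    set a0 : Fin (n i) := ⟨0, hn i⟩
    have h1 := psd_diag_nonneg hx ⟨i, a0⟩
    have h2 : x ⟨i, a0⟩ ⟨i, a0⟩ = e := by
      have := congrFun (congrFun he a0) a0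
      simpa [Matrix.one_apply, blk_entry] using this
    linarith
  -- xt agrees with x on the (i,i) block
  have hNT0 : ∀ (M : Matrix (BIx n) (BIx n) ℝ) (a : Fin (n i)) (q : BIx n),
      (Nᵀ * M) ⟨i, a⟩ q = 0 := by
    intro M a q
    rw [Matrix.mul_apply]
    refine Finset.sum_eq_zero fun s _ => ?_
    rw [Matrix.transpose_apply, hNsupp s ⟨i, a⟩ (by rintro ⟨-, h⟩; exact lt_irrefl i h), zero_mul]
  have hMN0 : ∀ (M : Matrix (BIx n) (BIx n) ℝ) (p : BIx n) (b : Fin (n i)),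
      (M * N) p ⟨i, b⟩ = 0 := by
    intro M p b
    rw [Matrix.mul_apply]
    refine Finset.sum_eq_zero fun s _ => ?_
    rw [hNsupp s ⟨i, b⟩ (by rintro ⟨-, h⟩; exact lt_irrefl i h), mul_zero]
  have hUT : Uᵀ = 1 - c⁻¹ • Nᵀ := by
    rw [hU, Matrix.transpose_sub, Matrix.transpose_one, Matrix.transpose_smul]
  have hxtblk : ∀ a b : Fin (n i), xt ⟨i, a⟩ ⟨i, b⟩ = x ⟨i, a⟩ ⟨i, b⟩ := by
    intro a b
    have e1 : xt = (x - c⁻¹ • (Nᵀ * x)) - c⁻¹ • ((x - c⁻¹ • (Nᵀ * x)) * N) := by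
      rw [hxt, hUT, Matrix.sub_mul, Matrix.one_mul, Matrix.smul_mul, hU,
        Matrix.mul_sub, Matrix.mul_one, Matrix.mul_smul]
    rw [e1]
    simp [Matrix.sub_apply, Matrix.smul_apply, hNT0, hMN0]
  -- hence xt = e • E
  have hxtE : xt = e • E := by
    ext p q
    by_cases hpq : p.1 = i ∧ q.1 = i
    · obtain ⟨hp, hq⟩ := hpq
      obtain ⟨pi, pa⟩ := p
      obtain ⟨qi, qb⟩ := q
      dsimp only at hp hq
      subst hp
      subst hq
      rw [hxtblk pa qb, Matrix.smul_apply, hE, IB_apply_same, smul_eq_mul]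
      have := congrFun (congrFun he pa) qb
      simpa [Matrix.one_apply, blk_entry] using this
    · rw [hxtsupp p q (by tauto), Matrix.smul_apply, hE,
        IB_apply_ne (p := p) (q := q) (by tauto), smul_zero]
  -- reconstruct x
  have hxW : x = e • (Wᵀ * E * W) := by
    have h1 : x = Wᵀ * xt * W := by rw [hxt, hsandwich]
    rw [h1, hxtE, Matrix.mul_smul, Matrix.smul_mul]
  have hAW : Rᵀ * R = (c * c) • (Wᵀ * E * W) := by
    have h1 : Rᵀ * R = Wᵀ * (Uᵀ * (Rᵀ * R) * U) * W := (hsandwich _).symm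
    rw [h1, hAU, Matrix.mul_smul, Matrix.smul_mul]
  refine ⟨e / (c * c), div_nonneg he0 (by positivity), ?_⟩
  rw [hAW, hxW, smul_smul, div_mul_cancel₀ _ (by positivity)]

lemma mem_ray_self {E : Type*} [AddCommGroup E] [Module ℝ E] (A : E) : A ∈ ray A :=
  ⟨1, zero_le_one, (one_smul _ _).symm⟩

/-- The ray of the Gram matrix of a good row is an extreme ray of the closed cone. -/
lemma ray_gram_extreme
    (hn : ∀ i, 0 < n i)
    (hdiag : ∀ i : Fin r, Vb i i = Submodule.span ℝ {(1 : Matrix (Fin (n i)) (Fin (n i)) ℝ)})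
    (hV2 : ∀ i j k : Fin r, i ≤ j → j < k → ∀ A ∈ Vb i j, ∀ B ∈ Vb i k, Aᵀ * B ∈ Vb j k)
    (hV3 : ∀ i j : Fin r, i ≤ j → ∀ A ∈ Vb i j,
      ∃ c : ℝ, Aᵀ * A = c • (1 : Matrix (Fin (n j)) (Fin (n j)) ℝ))
    {i : Fin r} {R : Matrix (BIx n) (BIx n) ℝ} (hG : GoodRow n Vb i R) :
    IsExtremeRayOf (ray (Rᵀ * R)) (KclSet n Vb) := by
  obtain ⟨c, hc, hpivot⟩ := hG.2.1
  have hmem : Rᵀ * R ∈ KclSet n Vb := gram_mem_KclSet hdiag hV2 hV3 hG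
  have hA0 : Rᵀ * R ≠ 0 := by
    intro h0
    set a0 : Fin (n i) := ⟨0, hn i⟩
    have h1 := congrFun (congrFun h0 ⟨i, a0⟩) ⟨i, a0⟩
    rw [Matrix.mul_apply, Matrix.zero_apply] at h1
    have h2 := (Finset.sum_eq_zero_iff_of_nonneg
      (fun s _ => by rw [Matrix.transpose_apply]; exact mul_self_nonneg _)).mp h1
       ⟨i, a0⟩ (Finset.mem_univ _)
    rw [Matrix.transpose_apply] at h2
    have h3 : R ⟨i, a0⟩ ⟨i, a0⟩ = c := by
      have := congrFun (congrFun hpivot a0) a0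
      simpa [Matrix.one_apply, blk_entry] using this
    rw [h3] at h2
    exact hc.ne' (mul_self_eq_zero.mp h2)
  constructor
  · refine ⟨⟨Rᵀ * R, mem_ray_self _⟩, ?_, ?_, ?_⟩
    · rintro X ⟨κ, hκ, rfl⟩
      exact KclSet_smul hmem hκ
    · rintro X ⟨a, ha, rfl⟩ Y ⟨b, hb, rfl⟩ s t hs ht hst
      exact ⟨s * a + t * b, by positivity, by rw [smul_smul, smul_smul, ← add_smul]⟩
    · rintro x hx y hy ⟨t, ht0, ht1, ⟨κ, hκ, hline⟩⟩
      have h1t : 0 < 1 - t := by linarith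
      constructor
      · obtain ⟨μ, hμ, hmul⟩ := crux hn hdiag hG κ (psd_smul hx.1 ht0.le)
          (Vset_smul hx.2 t) (psd_smul hy.1 h1t.le) hline
        refine ⟨t⁻¹ * μ, by positivity, ?_⟩
        have : x = t⁻¹ • (t • x) := by
          rw [smul_smul, inv_mul_cancel₀ ht0.ne', one_smul]
        rw [this, hmul, smul_smul]
      · obtain ⟨μ, hμ, hmul⟩ := crux hn hdiag hG κ (psd_smul hy.1 h1t.le)
          (Vset_smul hy.2 (1 - t)) (psd_smul hx.1 ht0.le)
          (by rw [add_comm]; exact hline)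
        refine ⟨(1 - t)⁻¹ * μ, by positivity, ?_⟩
        have : y = (1 - t)⁻¹ • ((1 - t) • y) := by
          rw [smul_smul, inv_mul_cancel₀ h1t.ne', one_smul]
        rw [this, hmul, smul_smul]
  · have hspan : Submodule.span ℝ (ray (Rᵀ * R)) = Submodule.span ℝ {Rᵀ * R} := by
      apply le_antisymm
      · rw [Submodule.span_le]
        rintro X ⟨κ, hκ, rfl⟩
        exact Submodule.smul_mem _ _ (Submodule.mem_span_singleton_self _)
      · rw [Submodule.span_le]
        rintro X hX
        rw [Set.mem_singleton_iff] at hX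
        subst hX
        exact Submodule.subset_span (mem_ray_self _)
    rw [hspan]
    exact finrank_span_singleton hA0

/-- Cholesky-type decomposition inside the cone: any PSD element of `V^B` supported on block
rows `≥ s` is a sum of Gram matrices of good rows (or zero rows) indexed by `B ∩ [s, r)`. -/
lemma cholesky
    (hn : ∀ i, 0 < n i)
    (hdiag : ∀ i : Fin r, Vb i i = Submodule.span ℝ {(1 : Matrix (Fin (n i)) (Fin (n i)) ℝ)})
    (hV2 : ∀ i j k : Fin r, i ≤ j → j < k → ∀ A ∈ Vb i j, ∀ B ∈ Vb i k, Aᵀ * B ∈ Vb j k)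
    (hV3 : ∀ i j : Fin r, i ≤ j → ∀ A ∈ Vb i j,
      ∃ c : ℝ, Aᵀ * A = c • (1 : Matrix (Fin (n j)) (Fin (n j)) ℝ))
    (B : Finset (Fin r)) :
    ∀ m s : ℕ, r - s ≤ m → ∀ Y : Matrix (BIx n) (BIx n) ℝ, Y.PosSemidef → Y ∈ VBset n Vb B →
    (∀ p q : BIx n, (p.1 : ℕ) < s → Y p q = 0) →
    ∃ R : Fin r → Matrix (BIx n) (BIx n) ℝ,
      (∀ i, R i = 0 ∨ GoodRow n Vb i (R i)) ∧ (∀ i, i ∉ B → R i = 0) ∧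
      (∀ i : Fin r, (i : ℕ) < s → R i = 0) ∧ Y = ∑ i, (R i)ᵀ * (R i) := by
  intro m
  induction m with
  | zero =>
    intro s hs Y hY hYV hsupp
    refine ⟨fun _ => 0, fun i => Or.inl rfl, fun _ _ => rfl, fun _ _ => rfl, ?_⟩
    have hY0 : Y = 0 := by
      ext p q
      exact hsupp p q (lt_of_lt_of_le p.1.2 (Nat.le_of_sub_eq_zero (Nat.le_zero.mp hs)))
    rw [hY0]
    simp
  | succ m ih =>
    intro s hs Y hY hYV hsupp
    by_cases hsr : r ≤ s
    · refine ⟨fun _ => 0, fun i => Or.inl rfl, fun _ _ => rfl, fun _ _ => rfl, ?_⟩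
      have hY0 : Y = 0 := by
        ext p q
        exact hsupp p q (lt_of_lt_of_le p.1.2 hsr)
      rw [hY0]
      simp
    · push_neg at hsr
      set i : Fin r := ⟨s, hsr⟩ with hidef
      -- the common "zero pivot" recursion
      have hzeroCase : (∀ (a : Fin (n i)) (q : BIx n), Y ⟨i, a⟩ q = 0) →
          ∃ R : Fin r → Matrix (BIx n) (BIx n) ℝ,
            (∀ j, R j = 0 ∨ GoodRow n Vb j (R j)) ∧ (∀ j, j ∉ B → R j = 0) ∧
            (∀ j : Fin r, (j : ℕ) < s → R j = 0) ∧ Y = ∑ j, (R j)ᵀ * (R j) := by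
        intro hrow
        have hsupp' : ∀ p q : BIx n, (p.1 : ℕ) < s + 1 → Y p q = 0 := by
          intro p q hp
          rcases Nat.lt_succ_iff_lt_or_eq.mp hp with h | h
          · exact hsupp p q h
          · obtain ⟨pi, pa⟩ := p
            have hpi : pi = i := Fin.ext h
            subst hpi
            exact hrow pa q
        obtain ⟨R, h1, h2, h3, h4⟩ := ih (s + 1) (by omega) Y hY hYV hsupp'
        exact ⟨R, h1, h2, fun j hj => h3 j (by omega), h4⟩
      by_cases hiB : i ∈ B
      · -- extract the scalar pivot
        obtain ⟨c, hcY⟩ : ∃ c : ℝ, blk Y i i = c • 1 := by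
          have hmem := hYV.1.2 i i le_rfl
          rw [hdiag i] at hmem
          obtain ⟨c, hc⟩ := Submodule.mem_span_singleton.mp hmem
          exact ⟨c, hc.symm⟩
        have hYentry : ∀ a b : Fin (n i), Y ⟨i, a⟩ ⟨i, b⟩ = c * (if a = b then 1 else 0) := by
          intro a b
          have := congrFun (congrFun hcY a) b
          simpa [Matrix.one_apply, blk_entry] using this
        have hc0 : 0 ≤ c := by
          have h1 := psd_diag_nonneg hY ⟨i, ⟨0, hn i⟩⟩
          rw [hYentry] at h1
          simpa using h1
        rcases hc0.eq_or_lt with hceq | hcpos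
        · -- zero pivot: the whole block row vanishes
          apply hzeroCase
          intro a q
          exact (psd_row_eq_zero hY ⟨i, a⟩ (by rw [hYentry]; simp [← hceq]) q).1
        · -- positive pivot: peel off a good row
          set E : Matrix (BIx n) (BIx n) ℝ := IB n {i} with hE
          set Ri : Matrix (BIx n) (BIx n) ℝ := Real.sqrt c⁻¹ • (E * Y) with hRi
          have hYsymm : Yᵀ = Y := hYV.1.1
          have hYapp : ∀ p q : BIx n, Y p q = Y q p := fun p q =>
            congrFun (congrFun hYsymm q) p
          have hEY : ∀ p q : BIx n, (E * Y) p q = if p.1 = i then Y p q else 0 :=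
            IB_mul_apply i Y
          have hRisupp : ∀ p q : BIx n, p.1 ≠ i → Ri p q = 0 := by
            intro p q hp
            rw [hRi, Matrix.smul_apply, hEY, if_neg hp, smul_zero]
          have hYEY : ∀ p q : BIx n, (Y * E * Y) p q =
              ∑ b : Fin (n i), Y p ⟨i, b⟩ * Y ⟨i, b⟩ q := by
            intro p q
            rw [Matrix.mul_assoc, Matrix.mul_apply,
              ← sum_block i (fun s => Y p s * Y s q)]
            refine Finset.sum_congr rfl fun t _ => ?_
            rw [IB_mul_apply]
            by_cases ht : t.1 = i
            · rw [if_pos ht, if_pos ht]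
            · rw [if_neg ht, if_neg ht, mul_zero]
          -- Gram matrix of the new row
          have hRR : Riᵀ * Ri = c⁻¹ • (Y * E * Y) := by
            rw [hRi, Matrix.transpose_smul, Matrix.smul_mul, Matrix.mul_smul, smul_smul,
              Real.mul_self_sqrt (inv_nonneg.mpr hc0)]
            congr 1
            rw [Matrix.transpose_mul, hYsymm, IB_transpose]
            calc Y * E * (E * Y) = Y * (E * E) * Y := by simp only [Matrix.mul_assoc]
              _ = Y * E * Y := by rw [IB_mul_IB, Matrix.mul_assoc]
          set Y' : Matrix (BIx n) (BIx n) ℝ := Y - c⁻¹ • (Y * E * Y) with hY'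
          -- Y' is PSD
          have hEYE : E * Y * E = c • E := by
            ext p q
            rw [Matrix.mul_assoc, IB_mul_apply, Matrix.smul_apply]
            by_cases hp : p.1 = i
            · rw [if_pos hp, mul_IB_apply]
              by_cases hq : q.1 = i
              · rw [if_pos hq]
                obtain ⟨pi, pa⟩ := p
                obtain ⟨qi, qb⟩ := q
                dsimp only at hp hq
                subst hp
                subst hq
                rw [hYentry, hE, IB_apply_same, smul_eq_mul]
              · rw [if_neg hq, hE, IB_apply_ne (Or.inr hq), smul_zero]
            · rw [if_neg hp, hE, IB_apply_ne (Or.inl hp), smul_zero]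
          have hMexp : (1 - c⁻¹ • (E * Y))ᵀ * Y * (1 - c⁻¹ • (E * Y)) = Y' := by
            have hMT : (1 - c⁻¹ • (E * Y))ᵀ = 1 - c⁻¹ • (Y * E) := by
              rw [Matrix.transpose_sub, Matrix.transpose_one, Matrix.transpose_smul,
                Matrix.transpose_mul, hYsymm, hE, IB_transpose]
            rw [hMT, Matrix.sub_mul, Matrix.one_mul, Matrix.smul_mul, Matrix.mul_sub,
              Matrix.mul_one, Matrix.mul_smul]
            have hassoc1 : Y * E * Y * (E * Y) = c • (Y * E * Y) := by
              calc Y * E * Y * (E * Y) = Y * (E * Y * E) * Y := by simp only [Matrix.mul_assoc]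
                _ = c • (Y * E * Y) := by
                    rw [hEYE, Matrix.mul_smul, Matrix.smul_mul]
            rw [Matrix.sub_mul, Matrix.smul_mul, hassoc1, smul_smul,
              inv_mul_cancel₀ hcpos.ne', one_smul, ← Matrix.mul_assoc, sub_self, smul_zero,
              sub_zero, hY']
          have hY'psd : Y'.PosSemidef := by
            rw [← hMexp]
            exact psd_conj hY _
          -- block description of Y*E*Y
          have hblkYEY : ∀ j k : Fin r, blk (Y * E * Y) j k = (blk Y i j)ᵀ * blk Y i k := by
            intro j k
            ext a b
            rw [blk_entry, hYEY, Matrix.mul_apply]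
            refine Finset.sum_congr rfl fun t _ => ?_
            rw [Matrix.transpose_apply, blk_entry, blk_entry, hYapp ⟨j, a⟩ ⟨i, t⟩]
          -- auxiliary block vanishing facts
          have hYlow : ∀ j : Fin r, (j : ℕ) < s → blk Y i j = 0 := by
            intro j hj
            ext a b
            rw [blk_entry, hYapp]
            exact hsupp ⟨j, b⟩ ⟨i, a⟩ hj
          have hYB0 : ∀ j : Fin r, j ∉ B → blk Y i j = 0 := by
            intro j hj
            rcases le_or_gt i j with hij | hji
            · exact hYV.2 i j hij (Or.inr hj)
            · exact hYlow j hji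
          -- Y' ∈ VBset
          have hY'V : Y' ∈ VBset n Vb B := by
            refine ⟨⟨?_, fun j k hjk => ?_⟩, fun j k hjk hB => ?_⟩
            · show Y'ᵀ = Y'
              rw [hY', Matrix.transpose_sub, Matrix.transpose_smul, hYsymm]
              congr 2
              rw [Matrix.transpose_mul, Matrix.transpose_mul, hYsymm, hE, IB_transpose,
                Matrix.mul_assoc]
            · rw [hY', blk_sub, blk_smul, hblkYEY]
              refine Submodule.sub_mem _ (hYV.1.2 j k hjk) (Submodule.smul_mem _ _ ?_)
              rcases lt_or_ge j i with hji | hij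
              · rw [hYlow j hji]
                simp only [Matrix.transpose_zero, Matrix.zero_mul]
                exact Submodule.zero_mem _
              · rcases eq_or_lt_of_le hjk with rfl | hjk'
                · obtain ⟨d, hd⟩ := hV3 i j hij (blk Y i j) (hYV.1.2 i j hij)
                  rw [hd, hdiag j]
                  exact Submodule.smul_mem _ _ (Submodule.mem_span_singleton_self _)
                · exact hV2 i j k hij hjk' _ (hYV.1.2 i j hij) _ (hYV.1.2 i k (hij.trans hjk))
            · rw [hY', blk_sub, blk_smul, hblkYEY, hYV.2 j k hjk hB]
              rcases hB with hB | hB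
              · rw [hYB0 j hB]
                simp
              · rw [hYB0 k hB]
                simp
          -- support of Y'
          have hY'supp : ∀ p q : BIx n, (p.1 : ℕ) < s + 1 → Y' p q = 0 := by
            intro p q hp
            rcases Nat.lt_succ_iff_lt_or_eq.mp hp with h | h
            · rw [hY', Matrix.sub_apply, Matrix.smul_apply, hYEY, hsupp p q h]
              rw [Finset.sum_eq_zero (fun b _ => by rw [hsupp p ⟨i, b⟩ h, zero_mul])]
              simp
            · obtain ⟨pi, pa⟩ := p
              have hpi : pi = i := Fin.ext h
              subst hpi
              rw [hY', Matrix.sub_apply, Matrix.smul_apply, hYEY]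
              have hsum : ∑ b : Fin (n i), Y ⟨i, pa⟩ ⟨i, b⟩ * Y ⟨i, b⟩ q
                  = c * Y ⟨i, pa⟩ q := by
                rw [Finset.sum_congr rfl (fun b _ => by rw [hYentry pa b])]
                rw [Finset.sum_congr rfl (fun b _ => by rw [mul_ite, mul_one, mul_zero, ite_mul,
                  zero_mul])]
                rw [Finset.sum_ite_eq]
                simp
              rw [hsum, smul_eq_mul, ← mul_assoc, inv_mul_cancel₀ hcpos.ne', one_mul, sub_self]
          -- recursion
          obtain ⟨R', hg', hB', hs', hsum'⟩ := ih (s + 1) (by omega) Y' hY'psd hY'V hY'supp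
          -- assemble
          have hRigood : GoodRow n Vb i Ri := by
            refine ⟨hRisupp, ⟨Real.sqrt c, Real.sqrt_pos.mpr hcpos, ?_⟩, ?_, ?_⟩
            · ext a b
              rw [blk_entry, hRi, Matrix.smul_apply, hEY, if_pos rfl, hYentry,
                Matrix.smul_apply]
              rw [smul_eq_mul, smul_eq_mul, ← mul_assoc]
              congr 1
              rw [Real.sqrt_inv]
              rw [inv_mul_eq_iff_eq_mul₀ (Real.sqrt_ne_zero'.mpr hcpos)]
              exact (Real.mul_self_sqrt hc0).symm
            · intro j
              have hblkRi : blk Ri i j = Real.sqrt c⁻¹ • blk Y i j := by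
                ext a b
                rw [blk_entry, hRi, Matrix.smul_apply, hEY, if_pos rfl]
                rfl
              rw [hblkRi]
              rcases le_or_gt i j with hij | hji
              · exact Submodule.smul_mem _ _ (hYV.1.2 i j hij)
              · rw [hYlow j hji, smul_zero]
                exact Submodule.zero_mem _
            · intro j hj
              ext a b
              rw [blk_entry, hRi, Matrix.smul_apply, hEY, if_pos rfl]
              have hz := congrFun (congrFun (hYlow j hj) a) b
              rw [blk_entry] at hz
              simp [hz]
          refine ⟨Function.update R' i Ri, ?_, ?_, ?_, ?_⟩
          · intro j
            by_cases hj : j = i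
            · subst hj
              rw [Function.update_self]
              exact Or.inr hRigood
            · rw [Function.update_of_ne hj]
              exact hg' j
          · intro j hj
            have hjne : j ≠ i := fun h => hj (h ▸ hiB)
            rw [Function.update_of_ne hjne]
            exact hB' j hj
          · intro j hj
            have hjne : j ≠ i := by
              intro h
              rw [h, hidef] at hj
              exact lt_irrefl s hj
            rw [Function.update_of_ne hjne]
            exact hs' j (by omega)
          · have hfun : (fun j => (Function.update R' i Ri j)ᵀ * Function.update R' i Ri j)
                = Function.update (fun j => (R' j)ᵀ * R' j) i (Riᵀ * Ri) := by
              funext j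
              by_cases hj : j = i
              · subst hj
                rw [Function.update_self, Function.update_self]
              · rw [Function.update_of_ne hj, Function.update_of_ne hj]
            calc Y = Riᵀ * Ri + Y' := by rw [hRR, hY']; abel
              _ = ∑ j, (Function.update R' i Ri j)ᵀ * Function.update R' i Ri j := by
                  rw [hsum']
                  rw [show (∑ j, (Function.update R' i Ri j)ᵀ * Function.update R' i Ri j)
                    = ∑ j, Function.update (fun j => (R' j)ᵀ * R' j) i (Riᵀ * Ri) j from by
                      rw [hfun]]
                  rw [Finset.sum_update_of_mem (Finset.mem_univ i)]
                  congr 1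
                  have hR'i : R' i = 0 := hs' i (Nat.lt_succ_self s)
                  rw [Finset.sum_eq_sum_sdiff_singleton_add (Finset.mem_univ i)
                    (fun j => (R' j)ᵀ * R' j), hR'i]
                  simp
      · -- i ∉ B : block row i of Y vanishes
        apply hzeroCase
        intro a q
        have hblk0 : blk Y i i = 0 := hYV.2 i i le_rfl (Or.inl hiB)
        have hd : Y ⟨i, a⟩ ⟨i, a⟩ = 0 := by
          have := congrFun (congrFun hblk0 a) a
          simpa [blk_entry] using this
        exact (psd_row_eq_zero hY ⟨i, a⟩ hd q).1

/-- Main workhorse: any `Tᵀ X' T` with `T ∈ 𝕋₊₊` and `X'` PSD in `V^B` is a sum of at most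
`|B|` points of extreme rays of the closed cone. -/
lemma core
    (hn : ∀ i, 0 < n i)
    (hdiag : ∀ i : Fin r, Vb i i = Submodule.span ℝ {(1 : Matrix (Fin (n i)) (Fin (n i)) ℝ)})
    (hV1 : ∀ i j k : Fin r, i ≤ j → j ≤ k → ∀ A ∈ Vb i j, ∀ B ∈ Vb j k, A * B ∈ Vb i k)
    (hV2 : ∀ i j k : Fin r, i ≤ j → j < k → ∀ A ∈ Vb i j, ∀ B ∈ Vb i k, Aᵀ * B ∈ Vb j k)
    (hV3 : ∀ i j : Fin r, i ≤ j → ∀ A ∈ Vb i j,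
      ∃ c : ℝ, Aᵀ * A = c • (1 : Matrix (Fin (n j)) (Fin (n j)) ℝ))
    {T : Matrix (BIx n) (BIx n) ℝ} (hT : T ∈ TTpp n Vb) (B : Finset (Fin r))
    {X' : Matrix (BIx n) (BIx n) ℝ} (hX' : X'.PosSemidef) (hXV : X' ∈ VBset n Vb B) :
    SumExtreme (KclSet n Vb) B.card (Tᵀ * X' * T) := by
  classical
  obtain ⟨R, hg, hB0, -, hsum⟩ := cholesky hn hdiag hV2 hV3 B r 0 (by omega) X' hX' hXV
    (fun p q h => absurd h (Nat.not_lt_zero _))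
  obtain ⟨hT1, hT2, hT3⟩ := hT
  set S : Fin r → Matrix (BIx n) (BIx n) ℝ := fun i => R i * T with hS
  have hSgood : ∀ i, R i ≠ 0 → GoodRow n Vb i (S i) := by
    intro i hi
    have hGi : GoodRow n Vb i (R i) := (hg i).resolve_left hi
    obtain ⟨c, hc, hpivot⟩ := hGi.2.1
    obtain ⟨t, ht, hTii⟩ := hT2 i
    have hblkS : ∀ j, blk (S i) i j = ∑ k : Fin r, blk (R i) i k * blk T k j :=
      fun j => blk_mul (R i) T i j
    refine ⟨?_, ⟨c * t, mul_pos hc ht, ?_⟩, ?_, ?_⟩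
    · intro p q hp
      show (R i * T) p q = 0
      rw [Matrix.mul_apply]
      exact Finset.sum_eq_zero fun u _ => by rw [hGi.1 p u hp, zero_mul]
    · rw [hblkS, Finset.sum_eq_single i]
      · rw [hpivot, hTii, Matrix.smul_mul, Matrix.mul_smul, Matrix.one_mul, smul_smul]
      · intro k _ hk
        rcases lt_or_gt_of_ne hk with hki | hik
        · rw [hGi.2.2.2 k hki, Matrix.zero_mul]
        · rw [hT1 k i hik, Matrix.mul_zero]
      · intro h; exact absurd (Finset.mem_univ i) h
    · intro j
      rw [hblkS]
      refine Submodule.sum_mem _ fun k _ => ?_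
      rcases lt_or_ge k i with hki | hik
      · rw [hGi.2.2.2 k hki, Matrix.zero_mul]
        exact Submodule.zero_mem _
      · rcases le_or_gt k j with hkj | hjk
        · refine hV1 i k j hik hkj _ (hGi.2.2.1 k) _ ?_
          rcases eq_or_lt_of_le hkj with rfl | hkj'
          · obtain ⟨u, hu, hTkk⟩ := hT2 k
            rw [hTkk, hdiag k]
            exact Submodule.smul_mem _ _ (Submodule.mem_span_singleton_self _)
          · exact hT3 k j hkj'
        · rw [hT1 k j hjk, Matrix.mul_zero]
          exact Submodule.zero_mem _
    · intro j hj
      rw [hblkS]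
      refine Finset.sum_eq_zero fun k _ => ?_
      rcases lt_or_ge k i with hki | hik
      · rw [hGi.2.2.2 k hki, Matrix.zero_mul]
      · rw [hT1 k j (lt_of_lt_of_le hj hik), Matrix.mul_zero]
  have hsum2 : Tᵀ * X' * T = ∑ i, (S i)ᵀ * S i := by
    rw [hsum, Matrix.mul_sum, Matrix.sum_mul]
    refine Finset.sum_congr rfl fun i _ => ?_
    rw [hS]
    rw [Matrix.transpose_mul]
    simp only [Matrix.mul_assoc]
  set P : Finset (Fin r) := Finset.univ.filter (fun i => R i ≠ 0) with hP
  have hPB : P ⊆ B := by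
    intro i hi
    by_contra hiB
    exact (Finset.mem_filter.mp hi).2 (hB0 i hiB)
  have hcard : P.card ≤ B.card := Finset.card_le_card hPB
  have hS0 : ∀ i, i ∉ P → (S i)ᵀ * S i = 0 := by
    intro i hi
    have hRi : R i = 0 := by
      by_contra h
      exact hi (Finset.mem_filter.mpr ⟨Finset.mem_univ i, h⟩)
    show (R i * T)ᵀ * (R i * T) = 0
    rw [hRi, Matrix.zero_mul, Matrix.transpose_zero, Matrix.zero_mul]
  let e : ↥P ≃ Fin P.card := Fintype.equivFinOfCardEq (Fintype.card_coe P)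
  refine ⟨P.card, fun j => (S ((e.symm j : ↥P) : Fin r))ᵀ * S ((e.symm j : ↥P) : Fin r),
    hcard, ?_, ?_⟩
  · intro j
    have hiP : ((e.symm j : ↥P) : Fin r) ∈ P := (e.symm j).2
    have hi : R ((e.symm j : ↥P) : Fin r) ≠ 0 := (Finset.mem_filter.mp hiP).2
    exact ⟨ray ((S _)ᵀ * S _),
      ray_gram_extreme hn hdiag hV2 hV3 (hSgood _ hi), mem_ray_self _⟩
  · rw [hsum2]
    have h1 : ∑ j : Fin P.card, (S ((e.symm j : ↥P) : Fin r))ᵀ * S ((e.symm j : ↥P) : Fin r)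
        = ∑ x : ↥P, (S (x : Fin r))ᵀ * S (x : Fin r) :=
      Equiv.sum_comp e.symm (fun x : ↥P => (S (x : Fin r))ᵀ * S (x : Fin r))
    have h2 : ∑ x : ↥P, (S (x : Fin r))ᵀ * S (x : Fin r) = ∑ i ∈ P, (S i)ᵀ * S i := by
      exact Finset.sum_coe_sort P (fun i => (S i)ᵀ * S i)
    have h3 : ∑ i ∈ P, (S i)ᵀ * S i = ∑ i, (S i)ᵀ * S i :=
      Finset.sum_subset (Finset.subset_univ P) (fun i _ hi => hS0 i hi)
    rw [h1, h2, h3]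

lemma one_mem_TTpp : (1 : Matrix (BIx n) (BIx n) ℝ) ∈ TTpp n Vb := by
  refine ⟨fun i j hij => ?_, fun i => ⟨1, one_pos, ?_⟩, fun i j hij => ?_⟩
  · ext a b
    rw [blk_entry, Matrix.one_apply_ne (by simp [Sigma.mk.inj_iff, hij.ne'])]
    rfl
  · ext a b
    rw [blk_entry, Matrix.smul_apply, one_smul]
    by_cases hab : a = b
    · subst hab; rw [Matrix.one_apply_eq, Matrix.one_apply_eq]
    · rw [Matrix.one_apply_ne (by simp [Sigma.mk.inj_iff, hab]),
        Matrix.one_apply_ne hab]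
  · have : blk (1 : Matrix (BIx n) (BIx n) ℝ) i j = 0 := by
      ext a b
      rw [blk_entry, Matrix.one_apply_ne (by simp [Sigma.mk.inj_iff, hij.ne])]
      rfl
    rw [this]
    exact Submodule.zero_mem _
end IshiAux

/-- **The Carathéodory number of the closure of an Ishi spectrahedral cone is at most `r`.**
Every matrix in `S^n_+ ∩ V` is a sum of at most `r` matrices lying on extreme rays of
`S^n_+ ∩ V`; more precisely, every matrix in the relative interior of a face `F_{T,B}`
is a sum of at most `|B|` matrices lying on extreme rays of `S^n_+ ∩ V`.  In particular
the Carathéodory number of `S^n_+ ∩ V` is at most `r`. -/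
theorem caratheodory_le_rank (r : ℕ) (hr : 1 ≤ r)
    (n : Fin r → ℕ) (hn : ∀ i, 0 < n i)
    (Vb : ∀ i j : Fin r, Submodule ℝ (Matrix (Fin (n i)) (Fin (n j)) ℝ))
    (hdiag : ∀ i : Fin r, Vb i i = Submodule.span ℝ {(1 : Matrix (Fin (n i)) (Fin (n i)) ℝ)})
    (hV1 : ∀ i j k : Fin r, i ≤ j → j ≤ k → ∀ A ∈ Vb i j, ∀ B ∈ Vb j k, A * B ∈ Vb i k)
    (hV2 : ∀ i j k : Fin r, i ≤ j → j < k → ∀ A ∈ Vb i j, ∀ B ∈ Vb i k, Aᵀ * B ∈ Vb j k)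
    (hV3 : ∀ i j : Fin r, i ≤ j → ∀ A ∈ Vb i j,
      ∃ c : ℝ, Aᵀ * A = c • (1 : Matrix (Fin (n j)) (Fin (n j)) ℝ))
    :
    (∀ X ∈ KclSet n Vb, SumExtreme (KclSet n Vb) r X) ∧
    (∀ T ∈ TTpp n Vb, ∀ B : Finset (Fin r), B.Nonempty →
      ∀ X ∈ intrinsicInterior ℝ (FTB n Vb T B), SumExtreme (KclSet n Vb) B.card X) ∧
    caraNumber (KclSet n Vb) ≤ r := by
  have main : ∀ X ∈ KclSet n Vb, SumExtreme (KclSet n Vb) r X := by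
    intro X hX
    have hXB : X ∈ VBset n Vb Finset.univ := by
      refine ⟨hX.2, fun i j _ hij => ?_⟩
      rcases hij with h | h
      · exact absurd (Finset.mem_univ i) h
      · exact absurd (Finset.mem_univ j) h
    have h := IshiAux.core hn hdiag hV1 hV2 hV3 (IshiAux.one_mem_TTpp) Finset.univ hX.1 hXB
    rw [Matrix.transpose_one, Matrix.one_mul, Matrix.mul_one] at h
    rwa [Finset.card_univ, Fintype.card_fin] at h
  refine ⟨main, ?_, ?_⟩
  · intro T hT B hBne X hX
    have hX' : X ∈ FTB n Vb T B := intrinsicInterior_subset hX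
    obtain ⟨X', hpsd, hVmem, rfl⟩ := hX'
    exact IshiAux.core hn hdiag hV1 hV2 hV3 hT B hpsd hVmem
  · exact Nat.sInf_le main
end
end

section
/- For all indices 1 ≤ i ≤ j < k ≤ r, every B ∈ V_jk, and all X, Y ∈ V_ij, one has ⟨X·B | Y·B⟩_F = (1/n_j)·‖B‖_F²·⟨X|Y⟩_F. (Equivalently, the right-multiplication map X ↦ X·B from V_ij into V_ik satisfies R_B* ∘ R_B = (1/n_j)·‖B‖_F² times the identity on V_ij.) -/
noncomputable section
open scoped Classical
open Matrix

variable {r : ℕ}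

/-- **The right-multiplication maps are similarities.**
For `1 ≤ i ≤ j < k ≤ r`, `B ∈ V_{jk}` and `X, Y ∈ V_{ij}`, one has
`⟨X·B | Y·B⟩_F = (1/n_j)·‖B‖_F²·⟨X|Y⟩_F`. -/
theorem right_multiplication_similarity (r : ℕ) (hr : 1 ≤ r)
    (n : Fin r → ℕ) (hn : ∀ i, 0 < n i)
    (Vb : ∀ i j : Fin r, Submodule ℝ (Matrix (Fin (n i)) (Fin (n j)) ℝ))
    (hdiag : ∀ i : Fin r, Vb i i = Submodule.span ℝ {(1 : Matrix (Fin (n i)) (Fin (n i)) ℝ)})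
    (hV1 : ∀ i j k : Fin r, i ≤ j → j ≤ k → ∀ A ∈ Vb i j, ∀ B ∈ Vb j k, A * B ∈ Vb i k)
    (hV2 : ∀ i j k : Fin r, i ≤ j → j < k → ∀ A ∈ Vb i j, ∀ B ∈ Vb i k, Aᵀ * B ∈ Vb j k)
    (hV3 : ∀ i j : Fin r, i ≤ j → ∀ A ∈ Vb i j,
      ∃ c : ℝ, Aᵀ * A = c • (1 : Matrix (Fin (n j)) (Fin (n j)) ℝ))
    (i j k : Fin r) (hij : i ≤ j) (hjk : j < k)
    (B : Matrix (Fin (n j)) (Fin (n k)) ℝ) (hB : B ∈ Vb j k)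
    (X : Matrix (Fin (n i)) (Fin (n j)) ℝ) (hX : X ∈ Vb i j)
    (Y : Matrix (Fin (n i)) (Fin (n j)) ℝ) (hY : Y ∈ Vb i j) :
    trInner (X * B) (Y * B) = (1 / (n j : ℝ)) * trInner B B * trInner X Y := by
  obtain ⟨a, ha⟩ := hV3 i j hij X hX
  obtain ⟨b, hb⟩ := hV3 i j hij Y hY
  obtain ⟨c, hc⟩ := hV3 i j hij (X + Y) (add_mem hX hY)
  have hS : Xᵀ * Y + Yᵀ * X = (c - a - b) • (1 : Matrix (Fin (n j)) (Fin (n j)) ℝ) := by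
    have hexp : (X + Y)ᵀ * (X + Y) = Xᵀ * X + (Xᵀ * Y + Yᵀ * X) + Yᵀ * Y := by
      simp [Matrix.transpose_add, Matrix.add_mul, Matrix.mul_add]
      abel
    have := hexp.symm.trans hc
    rw [ha, hb] at this
    have h2 : Xᵀ * Y + Yᵀ * X =
        c • (1 : Matrix (Fin (n j)) (Fin (n j)) ℝ) - a • 1 - b • 1 := by
      linear_combination (norm := abel) this
    rw [h2, ← sub_smul, ← sub_smul]
  -- traces
  have htr1 : trace (Yᵀ * X) = trace (Xᵀ * Y) := by
    rw [← Matrix.trace_transpose (Xᵀ * Y), Matrix.transpose_mul, Matrix.transpose_transpose]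
  have htrXY : 2 * trInner X Y = (c - a - b) * (n j : ℝ) := by
    have := congrArg Matrix.trace hS
    rw [Matrix.trace_add, htr1, Matrix.trace_smul, Matrix.trace_one] at this
    simp only [Fintype.card_fin, smul_eq_mul] at this
    simp only [trInner]
    linarith
  have htr2 : trace (Bᵀ * (Yᵀ * X) * B) = trace (Bᵀ * (Xᵀ * Y) * B) := by
    rw [← Matrix.trace_transpose (Bᵀ * (Xᵀ * Y) * B)]
    simp [Matrix.transpose_mul, Matrix.mul_assoc]
  have hLHS : 2 * trInner (X * B) (Y * B) = (c - a - b) * trInner B B := by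
    have hs : Bᵀ * (Xᵀ * Y) * B + Bᵀ * (Yᵀ * X) * B = (c - a - b) • (Bᵀ * B) := by
      rw [← Matrix.add_mul, ← Matrix.mul_add, hS]
      simp [Matrix.mul_smul, Matrix.smul_mul]
    have := congrArg Matrix.trace hs
    rw [Matrix.trace_add, htr2, Matrix.trace_smul] at this
    have he : trInner (X * B) (Y * B) = trace (Bᵀ * (Xᵀ * Y) * B) := by
      simp [trInner, Matrix.transpose_mul, Matrix.mul_assoc]
    rw [he, two_mul, this]
    simp [trInner, smul_eq_mul]
  have hnj : (n j : ℝ) ≠ 0 := Nat.cast_ne_zero.mpr (hn j).ne'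
  field_simp
  linear_combination ((n j : ℝ) / 2) * hLHS - (trInner B B / 2) * htrXY
end
end

section
/- For all indices 1 ≤ i < j < k ≤ r and all A ∈ V_ij, B ∈ V_ik, one has the identity ‖ ‖A‖_F²·B − n_j·A·(Aᵀ·B) ‖_F² = ‖A‖_F² · ( ‖A‖_F²·‖B‖_F² − n_j·‖Aᵀ·B‖_F² ). Consequently, ‖A‖_F²·‖B‖_F² = n_j·‖Aᵀ·B‖_F² holds if and only if ‖A‖_F²·B = n_j·A·(Aᵀ·B). -/
noncomputable section
open scoped Classical
open Matrix

variable {r : ℕ}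

lemma trInner_eq_sum {a b : Type*} [Fintype a] [Fintype b] (X Y : Matrix a b ℝ) :
    trInner X Y = ∑ q : b, ∑ p : a, X p q * Y p q := by
  simp [trInner, Matrix.trace, Matrix.diag, Matrix.mul_apply, Matrix.transpose_apply]

lemma trInner_self_nonneg {a b : Type*} [Fintype a] [Fintype b] (X : Matrix a b ℝ) :
    0 ≤ trInner X X := by
  rw [trInner_eq_sum]
  exact Finset.sum_nonneg fun q _ => Finset.sum_nonneg fun p _ => mul_self_nonneg _

lemma trInner_self_eq_zero {a b : Type*} [Fintype a] [Fintype b] (X : Matrix a b ℝ) :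
    trInner X X = 0 ↔ X = 0 := by
  rw [trInner_eq_sum]
  constructor
  · intro h
    ext p q
    have h1 : ∀ q ∈ Finset.univ, (0:ℝ) ≤ ∑ p : a, X p q * X p q :=
      fun q _ => Finset.sum_nonneg fun p _ => mul_self_nonneg _
    have h2 := (Finset.sum_eq_zero_iff_of_nonneg h1).mp h q (Finset.mem_univ q)
    have h3 := (Finset.sum_eq_zero_iff_of_nonneg
      (fun p _ => mul_self_nonneg (X p q))).mp h2 p (Finset.mem_univ p)
    exact mul_self_eq_zero.mp h3
  · intro h; simp [h]

/-- **A norm identity for `L_A L_A^*`.**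
For `1 ≤ i < j < k ≤ r`, `A ∈ V_{ij}` and `B ∈ V_{ik}`:
`‖ ‖A‖²·B − n_j·A·(Aᵀ·B) ‖² = ‖A‖²·(‖A‖²‖B‖² − n_j‖Aᵀ·B‖²)`; consequently
`‖A‖²‖B‖² = n_j‖Aᵀ·B‖²` holds iff `‖A‖²·B = n_j·A·(Aᵀ·B)`. -/
theorem norm_identity_LL (r : ℕ) (hr : 1 ≤ r)
    (n : Fin r → ℕ) (hn : ∀ i, 0 < n i)
    (Vb : ∀ i j : Fin r, Submodule ℝ (Matrix (Fin (n i)) (Fin (n j)) ℝ))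
    (hdiag : ∀ i : Fin r, Vb i i = Submodule.span ℝ {(1 : Matrix (Fin (n i)) (Fin (n i)) ℝ)})
    (hV1 : ∀ i j k : Fin r, i ≤ j → j ≤ k → ∀ A ∈ Vb i j, ∀ B ∈ Vb j k, A * B ∈ Vb i k)
    (hV2 : ∀ i j k : Fin r, i ≤ j → j < k → ∀ A ∈ Vb i j, ∀ B ∈ Vb i k, Aᵀ * B ∈ Vb j k)
    (hV3 : ∀ i j : Fin r, i ≤ j → ∀ A ∈ Vb i j,
      ∃ c : ℝ, Aᵀ * A = c • (1 : Matrix (Fin (n j)) (Fin (n j)) ℝ))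
    (i j k : Fin r) (hij : i < j) (hjk : j < k)
    (A : Matrix (Fin (n i)) (Fin (n j)) ℝ) (hA : A ∈ Vb i j)
    (B : Matrix (Fin (n i)) (Fin (n k)) ℝ) (hB : B ∈ Vb i k) :
    (trInner ((trInner A A) • B - (n j : ℝ) • (A * (Aᵀ * B)))
             ((trInner A A) • B - (n j : ℝ) • (A * (Aᵀ * B)))
      = trInner A A * (trInner A A * trInner B B - (n j : ℝ) * trInner (Aᵀ * B) (Aᵀ * B))) ∧
    (trInner A A * trInner B B = (n j : ℝ) * trInner (Aᵀ * B) (Aᵀ * B) ↔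
      (trInner A A) • B = (n j : ℝ) • (A * (Aᵀ * B))) := by
  obtain ⟨c, hc⟩ := hV3 i j hij.le A hA
  set C : Matrix (Fin (n j)) (Fin (n k)) ℝ := Aᵀ * B with hCdef
  set a : ℝ := trInner A A with hadef
  set m : ℝ := (n j : ℝ) with hmdef
  have hm : (0:ℝ) < m := by rw [hmdef]; exact_mod_cast hn j
  have ha : a = c * m := by
    rw [hadef, trInner, hc]
    simp [hmdef, Matrix.trace_smul, Matrix.trace_one]
  have hAC : trInner (A * C) (A * C) = c * trInner C C := by
    unfold trInner
    rw [Matrix.transpose_mul]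
    have : Cᵀ * Aᵀ * (A * C) = Cᵀ * (Aᵀ * A) * C := by
      rw [Matrix.mul_assoc, Matrix.mul_assoc, Matrix.mul_assoc]
    rw [this, hc, Matrix.mul_smul, Matrix.smul_mul, Matrix.trace_smul]
    simp
  have hBAC : trInner B (A * C) = trInner C C := by
    unfold trInner
    rw [hCdef, Matrix.transpose_mul, Matrix.transpose_transpose, Matrix.mul_assoc]
  have hACB : trInner (A * C) B = trInner C C := by
    rw [trInner_eq_sum, trInner_eq_sum] at hBAC ⊢
    rw [← hBAC]
    congr 1; ext q; congr 1; ext p; ring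
  -- Main identity
  have key : trInner (a • B - m • (A * C)) (a • B - m • (A * C))
      = a * (a * trInner B B - m * trInner C C) := by
    have e1 : trInner (a • B - m • (A * C)) (a • B - m • (A * C))
        = a * a * trInner B B - a * m * trInner B (A * C)
          - m * a * trInner (A * C) B + m * m * trInner (A * C) (A * C) := by
      rw [trInner_eq_sum (a • B - m • (A * C)), trInner_eq_sum B B,
        trInner_eq_sum B (A * C), trInner_eq_sum (A * C) B, trInner_eq_sum (A * C) (A * C)]
      simp only [Finset.mul_sum, ← Finset.sum_sub_distrib, ← Finset.sum_add_distrib]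
      refine Finset.sum_congr rfl fun q _ => Finset.sum_congr rfl fun p _ => ?_
      simp only [Matrix.sub_apply, Matrix.smul_apply, smul_eq_mul]
      ring
    rw [e1, hBAC, hACB, hAC, ha]
    ring
  refine ⟨key, ?_, ?_⟩
  · intro h
    have h0 : trInner (a • B - m • (A * C)) (a • B - m • (A * C)) = 0 := by
      rw [key, h]; ring
    have := (trInner_self_eq_zero _).mp h0
    have := sub_eq_zero.mp this
    exact this
  · intro h
    have h0 : a • B - m • (A * C) = 0 := sub_eq_zero.mpr h
    have h1 : a * (a * trInner B B - m * trInner C C) = 0 := by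
      rw [← key, h0]; simp [trInner]
    rcases mul_eq_zero.mp h1 with h2 | h2
    · have hA0 : A = 0 := (trInner_self_eq_zero A).mp h2
      have hC0 : C = 0 := by rw [hCdef, hA0]; simp
      rw [h2, hC0]
      simp [trInner]
    · linarith [sub_eq_zero.mp h2]
end
end

section
/- Let V := { [[x1, 0, x4], [0, x2, x5], [x4, x5, x3]] : x ∈ ℝ^5 } ⊆ S^3 and let D := proj_V(S^3_+) be the dual cone of the homogeneous convex cone S^3_++ ∩ V. Then the matrices A := [[1,0,1],[0,1,1],[1,1,1]] and B := [[1,0,−1],[0,1,−1],[−1,−1,1]] lie in D, the rays ℝ₊·A and ℝ₊·B are extreme rays of D, and I_3 = (1/2)·A + (1/2)·B. In particular, the identity matrix I_3, which lies in the relative interior of D, is the sum of two points lying on extreme rays of D, so the Carathéodory number of D at I_3 is at most 2 (whereas the rank of the cone S^3_++ ∩ V is 3). -/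
noncomputable section
open Matrix

/-- The Carathéodory number of the cone `C` at the point `x`. -/
def caraNumberAt {E : Type*} [AddCommGroup E] [Module ℝ E] (C : Set E) (x : E) : ℕ :=
  sInf {m | SumExtreme C m x}

/-- The subspace `V` of symmetric `3×3` matrices whose `(1,2)` entry vanishes. -/
def V19 : Set (Matrix (Fin 3) (Fin 3) ℝ) :=
  {X | X.IsSymm ∧ X 0 1 = 0 ∧ X 1 0 = 0}

/-- The dual cone `D = proj_V(S³₊)` of the homogeneous convex cone `S³₊₊ ∩ V`. -/
def D19 : Set (Matrix (Fin 3) (Fin 3) ℝ) :=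
  projSet V19 {X : Matrix (Fin 3) (Fin 3) ℝ | X.PosSemidef}

-- scratch area
abbrev M3 := Matrix (Fin 3) (Fin 3) ℝ

lemma trInner_eq (X Y : M3) : trInner X Y =
    X 0 0 * Y 0 0 + X 1 0 * Y 1 0 + X 2 0 * Y 2 0 +
    X 0 1 * Y 0 1 + X 1 1 * Y 1 1 + X 2 1 * Y 2 1 +
    X 0 2 * Y 0 2 + X 1 2 * Y 1 2 + X 2 2 * Y 2 2 := by
  simp [trInner, Matrix.trace, Matrix.diag, Matrix.mul_apply, Fin.sum_univ_three,
    Matrix.transpose_apply]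
  ring

lemma quadForm (X : M3) (hX : X.PosSemidef) (x : Fin 3 → ℝ) :
    0 ≤ x 0 * (X 0 0 * x 0 + X 0 1 * x 1 + X 0 2 * x 2)
      + x 1 * (X 1 0 * x 0 + X 1 1 * x 1 + X 1 2 * x 2)
      + x 2 * (X 2 0 * x 0 + X 2 1 * x 1 + X 2 2 * x 2) := by
  have := hX.dotProduct_mulVec_nonneg x
  simpa [dotProduct, Matrix.mulVec, Fin.sum_univ_three] using this

lemma psd_of_quad (X : M3) (hs : X.IsSymm)
    (h : ∀ x : Fin 3 → ℝ, 0 ≤ x 0 * (X 0 0 * x 0 + X 0 1 * x 1 + X 0 2 * x 2)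
      + x 1 * (X 1 0 * x 0 + X 1 1 * x 1 + X 1 2 * x 2)
      + x 2 * (X 2 0 * x 0 + X 2 1 * x 1 + X 2 2 * x 2)) : X.PosSemidef := by
  refine Matrix.PosSemidef.of_dotProduct_mulVec_nonneg ?_ ?_
  · ext i j
    simp only [Matrix.conjTranspose_apply, star_trivial]
    exact (Matrix.IsSymm.ext_iff.1 hs j i).symm ▸ rfl
  · intro x
    simpa [dotProduct, Matrix.mulVec, Fin.sum_univ_three] using h x

lemma memV19 (a b c d e : ℝ) : !![a, 0, d; 0, b, e; d, e, c] ∈ V19 := by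
  refine ⟨?_, rfl, rfl⟩
  ext i j
  fin_cases i <;> fin_cases j <;> simp [Matrix.transpose_apply, Matrix.vecHead, Matrix.vecTail]

lemma symm_apply {X : M3} (h : X.IsSymm) (i j : Fin 3) : X j i = X i j :=
  Matrix.IsSymm.ext_iff.1 h i j

lemma proj_entries {X y : M3} (hX : X.IsSymm) (h : IsProjOn V19 X y) :
    y = !![X 0 0, 0, X 0 2; 0, X 1 1, X 1 2; X 0 2, X 1 2, X 2 2] := by
  obtain ⟨⟨hys, hy01, hy10⟩, hperp⟩ := h
  have h00 := hperp _ (memV19 1 0 0 0 0)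
  have h11 := hperp _ (memV19 0 1 0 0 0)
  have h22 := hperp _ (memV19 0 0 1 0 0)
  have h02 := hperp _ (memV19 0 0 0 1 0)
  have h12 := hperp _ (memV19 0 0 0 0 1)
  rw [trInner_eq] at h00 h11 h22 h02 h12
  simp [Matrix.sub_apply, Matrix.vecHead, Matrix.vecTail] at h00 h11 h22 h02 h12
  have hX02 := symm_apply hX 0 2
  have hX12 := symm_apply hX 1 2
  have hy02 := symm_apply hys 0 2
  have hy12 := symm_apply hys 1 2
  ext i j
  fin_cases i <;> fin_cases j <;>
    simp_all <;> linarith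

abbrev Amat : M3 := !![(1:ℝ), 0, 1; 0, 1, 1; 1, 1, 1]
abbrev Bmat : M3 := !![(1:ℝ), 0, -1; 0, 1, -1; -1, -1, 1]
abbrev Jmat : M3 := !![(1:ℝ), 1, 1; 1, 1, 1; 1, 1, 1]
abbrev Kmat : M3 := !![(1:ℝ), 1, -1; 1, 1, -1; -1, -1, 1]

lemma Jmat_psd (c : ℝ) (hc : 0 ≤ c) : (c • Jmat).PosSemidef := by
  refine psd_of_quad _ ?_ ?_
  · ext i j; fin_cases i <;> fin_cases j <;> simp [Matrix.transpose_apply, Matrix.vecHead, Matrix.vecTail]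
  · intro x
    simp only [Matrix.smul_apply, smul_eq_mul]
    have := sq_nonneg (x 0 + x 1 + x 2)
    norm_num [Matrix.vecHead, Matrix.vecTail, Matrix.cons_val_two]
    nlinarith [sq_nonneg (x 0 + x 1 + x 2)]

lemma Kmat_psd (c : ℝ) (hc : 0 ≤ c) : (c • Kmat).PosSemidef := by
  refine psd_of_quad _ ?_ ?_
  · ext i j; fin_cases i <;> fin_cases j <;> simp [Matrix.transpose_apply, Matrix.vecHead, Matrix.vecTail]
  · intro x
    simp only [Matrix.smul_apply, smul_eq_mul]
    norm_num [Matrix.vecHead, Matrix.vecTail, Matrix.cons_val_two]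
    nlinarith [sq_nonneg (x 0 + x 1 - x 2)]

lemma proj_JA (c : ℝ) : IsProjOn V19 (c • Jmat) (c • Amat) := by
  constructor
  · refine ⟨?_, by simp [Matrix.vecHead, Matrix.vecTail], by simp [Matrix.vecHead, Matrix.vecTail]⟩
    ext i j; fin_cases i <;> fin_cases j <;> simp [Matrix.transpose_apply, Matrix.vecHead, Matrix.vecTail]
  · intro w hw
    rw [trInner_eq]
    simp [Matrix.vecHead, Matrix.vecTail, hw.2.1, hw.2.2]

lemma proj_KB (c : ℝ) : IsProjOn V19 (c • Kmat) (c • Bmat) := by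
  constructor
  · refine ⟨?_, by simp [Matrix.vecHead, Matrix.vecTail], by simp [Matrix.vecHead, Matrix.vecTail]⟩
    ext i j; fin_cases i <;> fin_cases j <;> simp [Matrix.transpose_apply, Matrix.vecHead, Matrix.vecTail]
  · intro w hw
    rw [trInner_eq]
    simp [Matrix.vecHead, Matrix.vecTail, hw.2.1, hw.2.2]

lemma rayA_sub_D : ray Amat ⊆ D19 := by
  rintro x ⟨c, hc, rfl⟩
  exact ⟨c • Jmat, Jmat_psd c hc, proj_JA c⟩

lemma rayB_sub_D : ray Bmat ⊆ D19 := by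
  rintro x ⟨c, hc, rfl⟩
  exact ⟨c • Kmat, Kmat_psd c hc, proj_KB c⟩

lemma trInner_sub_left (X y w : M3) : trInner (X - y) w = trInner X w - trInner y w := by
  simp only [trInner_eq, Matrix.sub_apply]; ring

lemma trInner_comm (X Y : M3) : trInner X Y = trInner Y X := by
  simp only [trInner_eq]; ring

lemma trInner_combo (S x y : M3) (t : ℝ) :
    trInner S (t • x + (1 - t) • y) = t * trInner S x + (1 - t) * trInner S y := by
  simp only [trInner_eq, Matrix.add_apply, Matrix.smul_apply, smul_eq_mul]; ring

lemma trInner_smul_right (S x : M3) (c : ℝ) : trInner S (c • x) = c * trInner S x := by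
  simp only [trInner_eq, Matrix.smul_apply, smul_eq_mul]; ring

lemma extreme_generic (Ag S : M3) (hSV : S ∈ V19)
    (hSpos : ∀ X : M3, X.PosSemidef → 0 ≤ trInner S X)
    (hSA : trInner S Ag = 0)
    (hker : ∀ X : M3, X.PosSemidef → trInner S X = 0 → ∀ y, IsProjOn V19 X y → y ∈ ray Ag)
    (hsub : ray Ag ⊆ D19) (hA0 : Ag ≠ 0) :
    IsExtremeRayOf (ray Ag) D19 := by
  constructor
  · refine ⟨⟨0, 0, le_refl 0, by simp⟩, hsub, ?_, ?_⟩
    · rintro p ⟨c, hc, rfl⟩ q ⟨d, hd, rfl⟩ s t hs ht hst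
      exact ⟨s * c + t * d, by positivity, by rw [smul_smul, smul_smul, ← add_smul]⟩
    · rintro x ⟨X, hXpsd, hXp⟩ y ⟨Y, hYpsd, hYp⟩ ⟨t, ht0, ht1, c, hc, hcomb⟩
      have hxX : trInner S x = trInner S X := by
        have := hXp.2 S hSV
        rw [trInner_sub_left] at this
        rw [trInner_comm S x, trInner_comm S X]; linarith
      have hyY : trInner S y = trInner S Y := by
        have := hYp.2 S hSV
        rw [trInner_sub_left] at this
        rw [trInner_comm S y, trInner_comm S Y]; linarith
      have hx0 : 0 ≤ trInner S x := hxX ▸ hSpos X hXpsd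
      have hy0 : 0 ≤ trInner S y := hyY ▸ hSpos Y hYpsd
      have hcombv : t * trInner S x + (1 - t) * trInner S y = 0 := by
        rw [← trInner_combo, hcomb, trInner_smul_right, hSA, mul_zero]
      have hxz : trInner S x = 0 := by nlinarith
      have hyz : trInner S y = 0 := by nlinarith
      exact ⟨hker X hXpsd (by rw [← hxX, hxz]) x hXp,
             hker Y hYpsd (by rw [← hyY, hyz]) y hYp⟩
  · have hspan : Submodule.span ℝ (ray Ag) = Submodule.span ℝ {Ag} := by
      refine le_antisymm (Submodule.span_le.2 ?_) (Submodule.span_mono ?_)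
      · rintro _ ⟨c, hc, rfl⟩
        exact Submodule.smul_mem _ c (Submodule.subset_span rfl)
      · rintro z hz
        rw [Set.mem_singleton_iff] at hz
        exact ⟨1, zero_le_one, by simp [hz]⟩
    rw [hspan]
    exact finrank_span_singleton hA0

lemma isSymm_of_psd {X : M3} (hX : X.PosSemidef) : X.IsSymm := by
  ext i j
  have := congrFun (congrFun hX.1 i) j
  simpa [Matrix.conjTranspose_apply] using this


lemma kerA (X : M3) (hX : X.PosSemidef)
    (h : trInner !![(2:ℝ), 0, -2; 0, 2, -2; -2, -2, 4] X = 0) :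
    ∀ y, IsProjOn V19 X y → y ∈ ray Amat := by
  intro y hy
  have hs : X.IsSymm := isSymm_of_psd hX
  have qu := quadForm X hX ![1, -1, 0]
  have qz := quadForm X hX ![1, 1, -2]
  have qa := quadForm X hX ![1, 0, 0]
  norm_num [Matrix.vecHead, Matrix.vecTail, Matrix.cons_val_two] at qu qz qa
  rw [trInner_eq] at h
  norm_num [Matrix.vecHead, Matrix.vecTail, Matrix.cons_val_two] at h
  have huz : X 0 0 - X 0 1 - X 1 0 + X 1 1 = 0 ∧
      X 0 0 + X 0 1 - 2 * X 0 2 + X 1 0 + X 1 1 - 2 * X 1 2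
        - 2 * X 2 0 - 2 * X 2 1 + 4 * X 2 2 = 0 := by constructor <;> nlinarith
  have hu0 : star (![1, -1, 0] : Fin 3 → ℝ) ⬝ᵥ X *ᵥ ![1, -1, 0] = 0 := by
    simp [dotProduct, Matrix.mulVec, Fin.sum_univ_three, Matrix.vecHead, Matrix.vecTail]
    linarith [huz.1]
  have hz0 : star (![1, 1, -2] : Fin 3 → ℝ) ⬝ᵥ X *ᵥ ![1, 1, -2] = 0 := by
    simp [dotProduct, Matrix.mulVec, Fin.sum_univ_three, Matrix.vecHead, Matrix.vecTail]
    linarith [huz.2]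
  have hXu := (hX.dotProduct_mulVec_zero_iff ![1, -1, 0]).1 hu0
  have hXz := (hX.dotProduct_mulVec_zero_iff ![1, 1, -2]).1 hz0
  have eu : ∀ i, X i 0 - X i 1 = 0 := by
    intro i
    have := congrFun hXu i
    simp [Matrix.mulVec, dotProduct, Fin.sum_univ_three, Matrix.vecHead,
      Matrix.vecTail] at this; linarith
  have ez : ∀ i, X i 0 + X i 1 - 2 * X i 2 = 0 := by
    intro i
    have := congrFun hXz i
    have h' : X i 0 + X i 1 + -(X i 2 * 2) = 0 := by
      simp [Matrix.mulVec, dotProduct, Fin.sum_univ_three, Matrix.vecHead,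
        Matrix.vecTail] at this; linarith
    linarith
  have e01 : X 0 1 = X 0 0 := by have := eu 0; linarith
  have e02 : X 0 2 = X 0 0 := by have := eu 0; have := ez 0; linarith
  have e10 : X 1 0 = X 0 0 := by have := symm_apply hs 0 1; linarith
  have e11 : X 1 1 = X 0 0 := by have := eu 1; linarith
  have e12 : X 1 2 = X 0 0 := by have := eu 1; have := ez 1; linarith
  have e20 : X 2 0 = X 0 0 := by have := symm_apply hs 0 2; linarith
  have e21 : X 2 1 = X 0 0 := by have := symm_apply hs 1 2; linarith
  have e22 : X 2 2 = X 0 0 := by have := eu 2; have := ez 2; linarith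
  have hyv := proj_entries hs hy
  refine ⟨X 0 0, by linarith, ?_⟩
  rw [hyv]
  ext i j
  fin_cases i <;> fin_cases j <;>
    simp [Matrix.vecHead, Matrix.vecTail, e01, e02, e10, e11, e12, e20, e21, e22]

lemma kerB (X : M3) (hX : X.PosSemidef)
    (h : trInner !![(2:ℝ), 0, 2; 0, 2, 2; 2, 2, 4] X = 0) :
    ∀ y, IsProjOn V19 X y → y ∈ ray Bmat := by
  intro y hy
  have hs : X.IsSymm := isSymm_of_psd hX
  have qu := quadForm X hX ![1, -1, 0]
  have qz := quadForm X hX ![1, 1, 2]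
  have qa := quadForm X hX ![1, 0, 0]
  norm_num [Matrix.vecHead, Matrix.vecTail, Matrix.cons_val_two] at qu qz qa
  rw [trInner_eq] at h
  norm_num [Matrix.vecHead, Matrix.vecTail, Matrix.cons_val_two] at h
  have huz : X 0 0 - X 0 1 - X 1 0 + X 1 1 = 0 ∧
      X 0 0 + X 0 1 + 2 * X 0 2 + X 1 0 + X 1 1 + 2 * X 1 2
        + 2 * X 2 0 + 2 * X 2 1 + 4 * X 2 2 = 0 := by constructor <;> nlinarith
  have hu0 : star (![1, -1, 0] : Fin 3 → ℝ) ⬝ᵥ X *ᵥ ![1, -1, 0] = 0 := by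
    simp [dotProduct, Matrix.mulVec, Fin.sum_univ_three, Matrix.vecHead, Matrix.vecTail]
    linarith [huz.1]
  have hz0 : star (![1, 1, 2] : Fin 3 → ℝ) ⬝ᵥ X *ᵥ ![1, 1, 2] = 0 := by
    simp [dotProduct, Matrix.mulVec, Fin.sum_univ_three, Matrix.vecHead, Matrix.vecTail]
    linarith [huz.2]
  have hXu := (hX.dotProduct_mulVec_zero_iff ![1, -1, 0]).1 hu0
  have hXz := (hX.dotProduct_mulVec_zero_iff ![1, 1, 2]).1 hz0
  have eu : ∀ i, X i 0 - X i 1 = 0 := by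
    intro i
    have := congrFun hXu i
    simp [Matrix.mulVec, dotProduct, Fin.sum_univ_three, Matrix.vecHead,
      Matrix.vecTail] at this; linarith
  have ez : ∀ i, X i 0 + X i 1 + 2 * X i 2 = 0 := by
    intro i
    have := congrFun hXz i
    have h' : X i 0 + X i 1 + X i 2 * 2 = 0 := by
      simp [Matrix.mulVec, dotProduct, Fin.sum_univ_three, Matrix.vecHead,
        Matrix.vecTail] at this; linarith
    linarith
  have e01 : X 0 1 = X 0 0 := by have := eu 0; linarith
  have e02 : X 0 2 = -X 0 0 := by have := eu 0; have := ez 0; linarith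
  have e10 : X 1 0 = X 0 0 := by have := symm_apply hs 0 1; linarith
  have e11 : X 1 1 = X 0 0 := by have := eu 1; linarith
  have e12 : X 1 2 = -X 0 0 := by have := eu 1; have := ez 1; linarith
  have e20 : X 2 0 = -X 0 0 := by have := symm_apply hs 0 2; linarith
  have e21 : X 2 1 = -X 0 0 := by have := symm_apply hs 1 2; linarith
  have e22 : X 2 2 = X 0 0 := by have := eu 2; have := ez 2; linarith
  have hyv := proj_entries hs hy
  refine ⟨X 0 0, by linarith, ?_⟩
  rw [hyv]
  ext i j
  fin_cases i <;> fin_cases j <;>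
    simp [Matrix.vecHead, Matrix.vecTail, e01, e02, e10, e11, e12, e20, e21, e22]

lemma extremeA : IsExtremeRayOf (ray Amat) D19 := by
  refine extreme_generic Amat !![(2:ℝ), 0, -2; 0, 2, -2; -2, -2, 4] ?_ ?_ ?_ kerA rayA_sub_D ?_
  · refine ⟨?_, by norm_num, by norm_num⟩
    ext i j
    fin_cases i <;> fin_cases j <;> simp [Matrix.transpose_apply, Matrix.vecHead, Matrix.vecTail]
  · intro X hX
    have qu := quadForm X hX ![1, -1, 0]
    have qz := quadForm X hX ![1, 1, -2]
    norm_num [Matrix.vecHead, Matrix.vecTail, Matrix.cons_val_two] at qu qz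
    rw [trInner_eq]
    norm_num [Matrix.vecHead, Matrix.vecTail, Matrix.cons_val_two]
    nlinarith
  · rw [trInner_eq]
    norm_num [Matrix.vecHead, Matrix.vecTail, Matrix.cons_val_two]
  · intro h
    have := congrFun (congrFun h 0) 0
    norm_num at this

lemma extremeB : IsExtremeRayOf (ray Bmat) D19 := by
  refine extreme_generic Bmat !![(2:ℝ), 0, 2; 0, 2, 2; 2, 2, 4] ?_ ?_ ?_ kerB rayB_sub_D ?_
  · refine ⟨?_, by norm_num, by norm_num⟩
    ext i j
    fin_cases i <;> fin_cases j <;> simp [Matrix.transpose_apply, Matrix.vecHead, Matrix.vecTail]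
  · intro X hX
    have qu := quadForm X hX ![1, -1, 0]
    have qz := quadForm X hX ![1, 1, 2]
    norm_num [Matrix.vecHead, Matrix.vecTail, Matrix.cons_val_two] at qu qz
    rw [trInner_eq]
    norm_num [Matrix.vecHead, Matrix.vecTail, Matrix.cons_val_two]
    nlinarith
  · rw [trInner_eq]
    norm_num [Matrix.vecHead, Matrix.vecTail, Matrix.cons_val_two]
  · intro h
    have := congrFun (congrFun h 0) 0
    norm_num at this

lemma one_sum : (1 : M3) = (1 / 2 : ℝ) • Amat + (1 / 2 : ℝ) • Bmat := by
  ext i j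
  fin_cases i <;> fin_cases j <;>
    norm_num [Matrix.one_apply, Matrix.vecHead, Matrix.vecTail, Fin.ext_iff]

def Vsub : Submodule ℝ M3 where
  carrier := V19
  zero_mem' := ⟨by simp [Matrix.IsSymm], by simp, by simp⟩
  add_mem' := by
    rintro X Y ⟨hX, hX1, hX2⟩ ⟨hY, hY1, hY2⟩
    exact ⟨by simp [Matrix.IsSymm, Matrix.transpose_add, hX.eq, hY.eq],
      by simp [Matrix.add_apply, hX1, hY1], by simp [Matrix.add_apply, hX2, hY2]⟩
  smul_mem' := by
    rintro c X ⟨hX, hX1, hX2⟩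
    exact ⟨by simp [Matrix.IsSymm, Matrix.transpose_smul, hX.eq],
      by simp [Matrix.smul_apply, hX1], by simp [Matrix.smul_apply, hX2]⟩

lemma D_sub_V : D19 ⊆ V19 := fun _ ⟨_, _, hp⟩ => hp.1

lemma one_mem_V : (1 : M3) ∈ V19 :=
  ⟨by simp [Matrix.IsSymm, Matrix.transpose_one],
   Matrix.one_apply_ne (by decide), Matrix.one_apply_ne (by decide)⟩

lemma one_mem_D : (1 : M3) ∈ D19 :=
  ⟨1, Matrix.PosSemidef.one, one_mem_V, fun w _ => by simp [trInner]⟩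

lemma near_psd (Z : M3) (hZ : Z ∈ V19)
    (h00 : |Z 0 0 - 1| < 1/4) (h11 : |Z 1 1 - 1| < 1/4) (h22 : |Z 2 2 - 1| < 1/4)
    (h02 : |Z 0 2| < 1/4) (h12 : |Z 1 2| < 1/4) : Z.PosSemidef := by
  obtain ⟨hs, hz01, hz10⟩ := hZ
  have h20 : Z 2 0 = Z 0 2 := symm_apply hs 0 2
  have h21 : Z 2 1 = Z 1 2 := symm_apply hs 1 2
  rw [abs_lt] at h00 h11 h22 h02 h12
  refine psd_of_quad Z hs ?_
  intro x
  rw [hz01, hz10, h20, h21]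
  nlinarith [mul_nonneg (by linarith : (0:ℝ) ≤ 1/4 + Z 0 2) (sq_nonneg (x 0 - x 2)),
    mul_nonneg (by linarith : (0:ℝ) ≤ 1/4 - Z 0 2) (sq_nonneg (x 0 + x 2)),
    mul_nonneg (by linarith : (0:ℝ) ≤ 1/4 + Z 1 2) (sq_nonneg (x 1 - x 2)),
    mul_nonneg (by linarith : (0:ℝ) ≤ 1/4 - Z 1 2) (sq_nonneg (x 1 + x 2)),
    mul_nonneg (by linarith : (0:ℝ) ≤ Z 0 0 - 3/4) (sq_nonneg (x 0)),
    mul_nonneg (by linarith : (0:ℝ) ≤ Z 1 1 - 3/4) (sq_nonneg (x 1)),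
    mul_nonneg (by linarith : (0:ℝ) ≤ Z 2 2 - 3/4) (sq_nonneg (x 2))]

lemma one_mem_intr : (1 : M3) ∈ intrinsicInterior ℝ D19 := by
  rw [mem_intrinsicInterior]
  refine ⟨⟨1, subset_affineSpan ℝ D19 one_mem_D⟩, ?_, rfl⟩
  have hle : affineSpan ℝ D19 ≤ Vsub.toAffineSubspace := by
    rw [affineSpan_le]
    intro y hy
    exact Submodule.mem_toAffineSubspace.2 (D_sub_V hy)
  set U : Set M3 := {Z | |Z 0 0 - 1| < 1/4} ∩ ({Z | |Z 1 1 - 1| < 1/4} ∩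
    ({Z | |Z 2 2 - 1| < 1/4} ∩ ({Z | |Z 0 2 - 0| < 1/4} ∩ {Z | |Z 1 2 - 0| < 1/4}))) with hU
  have hev : ∀ (i j : Fin 3) (c : ℝ), IsOpen {Z : M3 | |Z i j - c| < 1/4} := fun i j c =>
    isOpen_lt ((continuous_id.matrix_elem i j).sub continuous_const).abs continuous_const
  have hUopen : IsOpen U :=
    (hev 0 0 1).inter ((hev 1 1 1).inter ((hev 2 2 1).inter ((hev 0 2 0).inter (hev 1 2 0))))
  have hsub : (Subtype.val ⁻¹' U : Set (affineSpan ℝ D19)) ⊆ Subtype.val ⁻¹' D19 := by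
    rintro ⟨Z, hZ⟩ hZU
    obtain ⟨u1, u2, u3, u4, u5⟩ := hZU
    have hZV : Z ∈ V19 := Submodule.mem_toAffineSubspace.1 (hle hZ)
    have hpsd : Z.PosSemidef := near_psd Z hZV u1 u2 u3 (by simpa using u4) (by simpa using u5)
    exact ⟨Z, hpsd, hZV, fun w _ => by simp [trInner]⟩
  refine interior_maximal hsub (hUopen.preimage continuous_subtype_val) ?_
  refine ⟨?_, ?_, ?_, ?_, ?_⟩ <;>
    simp [Matrix.one_apply, Matrix.one_apply_ne, Fin.ext_iff]

/-- **A dual cone with Carathéodory number smaller than the rank.**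
For the non-selfdual homogeneous convex cone `S³₊₊ ∩ V` of rank `3`, the matrices
`A = [[1,0,1],[0,1,1],[1,1,1]]` and `B = [[1,0,-1],[0,1,-1],[-1,-1,1]]` lie in the dual cone
`D = proj_V(S³₊)`, the rays `ℝ₊·A` and `ℝ₊·B` are extreme rays of `D`, and
`I₃ = (1/2)·A + (1/2)·B`.  In particular `I₃`, which lies in the relative interior of `D`,
is a sum of two points on extreme rays of `D`, so the Carathéodory number of `D` at `I₃` is
at most `2`. -/
theorem dual_caratheodory_example :
    (!![(1:ℝ), 0, 1; 0, 1, 1; 1, 1, 1] ∈ D19) ∧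
    (!![(1:ℝ), 0, -1; 0, 1, -1; -1, -1, 1] ∈ D19) ∧
    IsExtremeRayOf (ray !![(1:ℝ), 0, 1; 0, 1, 1; 1, 1, 1]) D19 ∧
    IsExtremeRayOf (ray !![(1:ℝ), 0, -1; 0, 1, -1; -1, -1, 1]) D19 ∧
    ((1 : Matrix (Fin 3) (Fin 3) ℝ) =
      (1 / 2 : ℝ) • !![(1:ℝ), 0, 1; 0, 1, 1; 1, 1, 1] +
      (1 / 2 : ℝ) • !![(1:ℝ), 0, -1; 0, 1, -1; -1, -1, 1]) ∧
    ((1 : Matrix (Fin 3) (Fin 3) ℝ) ∈ intrinsicInterior ℝ D19) ∧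
    caraNumberAt D19 (1 : Matrix (Fin 3) (Fin 3) ℝ) ≤ 2 := by
  refine ⟨rayA_sub_D ⟨1, zero_le_one, (one_smul ℝ Amat).symm⟩,
    rayB_sub_D ⟨1, zero_le_one, (one_smul ℝ Bmat).symm⟩,
    extremeA, extremeB, one_sum, one_mem_intr, ?_⟩
  apply Nat.sInf_le
  refine ⟨2, ![(1/2 : ℝ) • Amat, (1/2 : ℝ) • Bmat], le_rfl, ?_, ?_⟩
  · intro i
    fin_cases i
    · exact ⟨ray Amat, extremeA, 1/2, by norm_num, rfl⟩
    · exact ⟨ray Bmat, extremeB, 1/2, by norm_num, rfl⟩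
  · rw [Fin.sum_univ_two]
    simpa using one_sum
end
end
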